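/- arXiv:1506.02298 — 2 statements merged into one kernel-verified Lean document; each statement's English description precedes it below -/
import Mathlib

section
/- In the Lenski model, fix 0 < a ≤ M and let (p_i)_{i≥0} be the sequence with initial distribution δ_a and mutant distribution q^a. Then: (1) if ∫ β q^a(dx)/(1 − ((1−β)/γ)^{1−x/a}) > 1 (the integral possibly infinite), there is a unique s_a ∈ (0, a^{-1}·log(γ/(1−β))) with ∫ β q^a(dx)/(1 − ((1−β)/γ)e^{s_a x}) = 1, and (p_i) converges in total variation to p^{a,*}(dx) = β q^a(dx)/(1 − ((1−β)/γ)e^{s_a x}); (2) if ∫ β q^a(dx)/(1 − ((1−β)/γ)^{1−x/a}) ≤ 1, then (p_i) converges in total variation to p^{a,*}(dx) = β q^a(dx)/(1 − ((1−β)/γ)^{1−x/a}) + (1 − ∫ β q^a(dy)/(1 − ((1−β)/γ)^{1−y/a})) δ_a. -/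
open MeasureTheory Set Filter

/-- The duration `t_u` of a day in the Lenski model: the (unique, when `u({0}) < 1` and `u`
is a probability measure on `[0,M]`) positive `t` with `∫ e^{t x} u(dx) = γ`, here realized
as the infimum of the positive times at which the capacity `γ` has been reached. -/
noncomputable def lenskiTime (γ : ℝ) (u : MeasureTheory.Measure ℝ) : ℝ :=
  sInf {t : ℝ | 0 < t ∧ γ ≤ ∫ x, Real.exp (t * x) ∂u}

/-- The Lenski iteration:
`p_i(dx) = (1-β) (e^{t_{p_{i-1}} x}/γ) p_{i-1}(dx) + β q(dx)`. -/
noncomputable def lenski (β γ : ℝ) (q p₀ : MeasureTheory.Measure ℝ) :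
    ℕ → MeasureTheory.Measure ℝ
  | 0 => p₀
  | i + 1 =>
      ENNReal.ofReal (1 - β) •
          ((lenski β γ q p₀ i).withDensity fun x =>
            ENNReal.ofReal (Real.exp (lenskiTime γ (lenski β γ q p₀ i) * x) / γ))
        + ENNReal.ofReal β • q

/-- Convergence in total variation (uniform convergence over all measurable sets). -/
def TendstoTV (p : ℕ → MeasureTheory.Measure ℝ) (μ : MeasureTheory.Measure ℝ) : Prop :=
  ∀ ε : ℝ, 0 < ε → ∃ N : ℕ, ∀ i ≥ N, ∀ A : Set ℝ, MeasurableSet A →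
    |((p i) A).toReal - (μ A).toReal| < ε

/-- Weak convergence of measures (tested against bounded continuous functions). -/
def TendstoWeak (p : ℕ → MeasureTheory.Measure ℝ) (μ : MeasureTheory.Measure ℝ) : Prop :=
  ∀ f : BoundedContinuousFunction ℝ ℝ,
    Filter.Tendsto (fun i => ∫ x, f x ∂(p i)) Filter.atTop (nhds (∫ x, f x ∂μ))

/-- The supremum `m_u` of the (closed) support of a probability measure `u` on `[0,M]`:
the smallest `x` with no mass strictly above it. -/
noncomputable def msupp (u : MeasureTheory.Measure ℝ) : ℝ :=
  sInf {x : ℝ | u (Set.Ioi x) = 0}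

/-- `h^a`: the pushforward of `h` under `x ↦ min x a`, i.e. `h` on `[0,a)` plus
`h([a,∞))·δ_a`. -/
noncomputable def trunc (a : ℝ) (h : MeasureTheory.Measure ℝ) : MeasureTheory.Measure ℝ :=
  MeasureTheory.Measure.map (fun x => min x a) h

open scoped ENNReal NNReal

set_option linter.unusedVariables false

section Defs

noncomputable def pseq (β γ a : ℝ) (ν : Measure ℝ) (n : ℕ) : Measure ℝ :=
  lenski β γ ν (Measure.dirac a) n

noncomputable def tauseq (β γ a : ℝ) (ν : Measure ℝ) (n : ℕ) : ℝ :=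
  lenskiTime γ (pseq β γ a ν n)

noncomputable def fseq (β γ a : ℝ) (ν : Measure ℝ) : ℕ → ℝ → ℝ
  | 0 => fun _ => 0
  | n + 1 => fun x =>
      (1 - β) / γ * Real.exp (tauseq β γ a ν n * x) * fseq β γ a ν n x + β

noncomputable def cseq (β γ a : ℝ) (ν : Measure ℝ) : ℕ → ℝ
  | 0 => 1
  | n + 1 => (1 - β) / γ * Real.exp (tauseq β γ a ν n * a) * cseq β γ a ν n
      + β * (ν {a}).toReal

lemma pseq_zero (β γ a : ℝ) (ν : Measure ℝ) : pseq β γ a ν 0 = Measure.dirac a := rfl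

lemma pseq_succ (β γ a : ℝ) (ν : Measure ℝ) (n : ℕ) :
    pseq β γ a ν (n + 1) = ENNReal.ofReal (1 - β) •
        ((pseq β γ a ν n).withDensity fun x =>
          ENNReal.ofReal (Real.exp (tauseq β γ a ν n * x) / γ))
      + ENNReal.ofReal β • ν := rfl

lemma tau_def (β γ a : ℝ) (ν : Measure ℝ) (n : ℕ) :
    tauseq β γ a ν n
      = sInf {t : ℝ | 0 < t ∧ γ ≤ ∫ x, Real.exp (t * x) ∂pseq β γ a ν n} := rfl

end Defs

lemma withDensity_dirac' {h : ℝ → ℝ≥0∞} (hm : Measurable h) (a : ℝ) :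
    (Measure.dirac a).withDensity h = h a • Measure.dirac a := by
  ext s hs
  classical
  rw [withDensity_apply _ hs, setLIntegral_dirac' hm hs, Measure.smul_apply,
    Measure.dirac_apply' _ hs, smul_eq_mul]
  by_cases hmem : a ∈ s <;> simp [hmem]

section Main

variable {β γ a : ℝ} {ν : Measure ℝ}
variable (hβ : β ∈ Set.Ioo (0:ℝ) 1) (hγ : 1 < γ) (ha : 0 < a)
set_option linter.unusedSectionVars false
variable [IsProbabilityMeasure ν] (hν : ν ((Set.Icc 0 a)ᶜ) = 0)

include hβ hγ in
lemma fseq_nonneg : ∀ n x, 0 ≤ fseq β γ a ν n x := by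
  intro n
  induction n with
  | zero => intro x; simp [fseq]
  | succ n ih =>
    intro x
    have h1 : (0:ℝ) ≤ (1 - β) / γ := div_nonneg (by linarith [hβ.2]) (by linarith)
    have h2 := ih x
    have he := (Real.exp_pos (tauseq β γ a ν n * x)).le
    have h3 := hβ.1
    have h4 := mul_nonneg (mul_nonneg h1 he) h2
    simp only [fseq]
    linarith

lemma fseq_cont : ∀ n, Continuous (fseq β γ a ν n) := by
  intro n
  induction n with
  | zero => simpa [fseq] using continuous_const
  | succ n ih =>
    simp only [fseq]
    fun_prop

include hν in
lemma rho_supp : (ν.restrict (Set.Iio a)) ((Set.Icc 0 a)ᶜ) = 0 := by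
  rw [Measure.restrict_apply (measurableSet_Icc.compl)]
  exact measure_mono_null Set.inter_subset_left hν

lemma rho_singleton : (ν.restrict (Set.Iio a)) {a} = 0 := by
  rw [Measure.restrict_apply (measurableSet_singleton a)]
  convert measure_empty (μ := ν)
  ext x
  simp only [Set.mem_inter_iff, Set.mem_singleton_iff, Set.mem_Iio, Set.mem_empty_iff_false,
    iff_false, not_and]
  rintro rfl
  exact lt_irrefl _

include ha hν in
lemma nu_Ioi : ν (Set.Ioi a) = 0 := by
  refine measure_mono_null (fun x hx => ?_) hν
  simp only [Set.mem_compl_iff, Set.mem_Icc, not_and, not_le]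
  intro _
  exact hx

include ha hν in
lemma nu_decomp : ν = ν.restrict (Set.Iio a) + ν {a} • Measure.dirac a := by
  conv_lhs => rw [← Measure.restrict_add_restrict_compl (μ := ν) (measurableSet_Iio (a := a))]
  congr 1
  have h1 : (Set.Iio a)ᶜ = Set.Ici a := compl_Iio
  have h2 : Set.Ici a =ᵐ[ν] ({a} : Set ℝ) := by
    rw [Filter.eventuallyEq_set]
    have h3 : ∀ᵐ x ∂ν, x ∉ Set.Ioi a := by
      have heq : {x : ℝ | ¬ x ∉ Set.Ioi a} = Set.Ioi a := by ext x; simp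
      rw [MeasureTheory.ae_iff, heq]; exact nu_Ioi ha hν
    filter_upwards [h3] with x hx
    simp only [Set.mem_Ici, Set.mem_singleton_iff]
    constructor
    · intro h; rcases eq_or_lt_of_le h with h' | h'
      · exact h'.symm
      · exact absurd h' hx
    · intro h; exact h.ge
  rw [h1, Measure.restrict_congr_set h2, Measure.restrict_singleton]

end Main


section Helpers

/-- Integrability of a measurable function bounded on `[0,a]` w.r.t. a finite measure
supported on `[0,a]`. -/
lemma integrable_of_bound {μ : Measure ℝ} [IsFiniteMeasure μ] {a : ℝ}
    (hs : μ ((Set.Icc 0 a)ᶜ) = 0) {h : ℝ → ℝ} (hm : AEStronglyMeasurable h μ) {C : ℝ}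
    (hC : ∀ x ∈ Set.Icc 0 a, |h x| ≤ C) : Integrable h μ := by
  have hae : ∀ᵐ x ∂μ, x ∈ Set.Icc 0 a := by
    have heq : {x : ℝ | ¬ x ∈ Set.Icc 0 a} = (Set.Icc 0 a)ᶜ := rfl
    rw [MeasureTheory.ae_iff, heq]; exact hs
  exact (integrable_const C).mono' hm (hae.mono fun x hx => by
    simpa [Real.norm_eq_abs] using hC x hx)

lemma integrable_of_continuous {μ : Measure ℝ} [IsFiniteMeasure μ] {a : ℝ}
    (hs : μ ((Set.Icc 0 a)ᶜ) = 0) {h : ℝ → ℝ} (hc : Continuous h) : Integrable h μ := by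
  obtain ⟨C, hC⟩ := isCompact_Icc.exists_bound_of_continuousOn (hc.continuousOn (s := Set.Icc 0 a))
  exact integrable_of_bound hs hc.measurable.aestronglyMeasurable
    (C := C) (fun x hx => by simpa [Real.norm_eq_abs] using hC x hx)

/-- The key properties of `lenskiTime`. -/
lemma root {γ : ℝ} (hγ : 1 < γ) {a : ℝ} (ha : 0 < a) (μ : Measure ℝ)
    [IsProbabilityMeasure μ] (hs : μ ((Set.Icc 0 a)ᶜ) = 0) (hatom : μ {a} ≠ 0) :
    0 < sInf {t : ℝ | 0 < t ∧ γ ≤ ∫ x, Real.exp (t * x) ∂μ} ∧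
      (∫ x, Real.exp (sInf {t : ℝ | 0 < t ∧ γ ≤ ∫ x, Real.exp (t * x) ∂μ} * x) ∂μ) = γ ∧
      (∀ t t' : ℝ, 0 ≤ t → t < t' →
        (∫ x, Real.exp (t * x) ∂μ) < ∫ x, Real.exp (t' * x) ∂μ) := by
  have hae : ∀ᵐ x ∂μ, x ∈ Set.Icc 0 a := by
    have heq : {x : ℝ | ¬ x ∈ Set.Icc 0 a} = (Set.Icc 0 a)ᶜ := rfl
    rw [MeasureTheory.ae_iff, heq]; exact hs
  set g : ℝ → ℝ := fun t => ∫ x, Real.exp (t * x) ∂μ with hg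
  have hint : ∀ t : ℝ, Integrable (fun x => Real.exp (t * x)) μ := fun t =>
    integrable_of_continuous hs (by continuity)
  have hmono : ∀ t t' : ℝ, t ≤ t' → g t ≤ g t' := by
    intro t t' htt
    refine integral_mono_ae (hint t) (hint t') (hae.mono fun x hx => ?_)
    exact Real.exp_le_exp.2 (mul_le_mul_of_nonneg_right htt hx.1)
  have hca : (0:ℝ) < (μ {a}).toReal := ENNReal.toReal_pos hatom (measure_ne_top μ _)
  have hsing : ∀ t : ℝ, (μ {a}).toReal * Real.exp (t * a) ≤ g t := by
    intro t
    have h0 : 0 ≤ᵐ[μ] fun x => Real.exp (t * x) :=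
      Filter.Eventually.of_forall fun x => (Real.exp_pos _).le
    have := setIntegral_le_integral (s := {a}) (hint t) h0
    rwa [MeasureTheory.Measure.restrict_singleton, integral_smul_measure, integral_dirac,
      smul_eq_mul] at this
  have hstrict : ∀ t t' : ℝ, 0 ≤ t → t < t' → g t < g t' := by
    intro t t' ht htt
    have hsub : g t' - g t = ∫ x, (Real.exp (t' * x) - Real.exp (t * x)) ∂μ :=
      (integral_sub (hint t') (hint t)).symm
    have h0 : 0 ≤ᵐ[μ] fun x => Real.exp (t' * x) - Real.exp (t * x) := by
      refine hae.mono fun x hx => sub_nonneg.2 ?_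
      exact Real.exp_le_exp.2 (mul_le_mul_of_nonneg_right htt.le hx.1)
    have hintsub : Integrable (fun x => Real.exp (t' * x) - Real.exp (t * x)) μ :=
      (hint t').sub (hint t)
    have hlow := setIntegral_le_integral (s := {a}) hintsub h0
    rw [MeasureTheory.Measure.restrict_singleton, integral_smul_measure, integral_dirac,
      smul_eq_mul] at hlow
    have hpos : 0 < (μ {a}).toReal * (Real.exp (t' * a) - Real.exp (t * a)) := by
      apply mul_pos hca
      have : t * a < t' * a := mul_lt_mul_of_pos_right htt ha
      simpa [sub_pos] using Real.exp_lt_exp.2 this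
    nlinarith [hsub, hlow]
  have hcont : Continuous g := by
    rw [continuous_iff_continuousAt]
    intro t₀
    refine MeasureTheory.continuousAt_of_dominated (F := fun t x => Real.exp (t * x))
      (bound := fun _ => Real.exp ((|t₀| + 1) * a))
      (Filter.Eventually.of_forall fun t => (by continuity : Continuous fun x =>
        Real.exp (t * x)).aestronglyMeasurable) ?_ (integrable_const _)
      (Filter.Eventually.of_forall fun x => (by continuity : Continuous fun t =>
        Real.exp (t * x)).continuousAt)
    have hball : Metric.ball t₀ 1 ∈ nhds t₀ := Metric.ball_mem_nhds _ one_pos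
    refine Filter.eventually_of_mem hball fun t ht => hae.mono fun x hx => ?_
    rw [Real.norm_eq_abs, Real.abs_exp]
    apply Real.exp_le_exp.2
    have h1 : |t| ≤ |t₀| + 1 := by
      have := abs_sub_abs_le_abs_sub t t₀
      rw [Metric.mem_ball, Real.dist_eq] at ht
      linarith
    calc t * x ≤ |t| * x := mul_le_mul_of_nonneg_right (le_abs_self t) hx.1
      _ ≤ (|t₀| + 1) * x := mul_le_mul_of_nonneg_right h1 hx.1
      _ ≤ (|t₀| + 1) * a := mul_le_mul_of_nonneg_left hx.2 (by positivity)
  have hg0 : g 0 = 1 := by simp [hg]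
  set S := {t : ℝ | 0 < t ∧ γ ≤ g t} with hS
  have hne : S.Nonempty := by
    set c := (μ {a}).toReal
    set T : ℝ := max 1 (Real.log (γ / c) / a)
    refine ⟨T, lt_of_lt_of_le one_pos (le_max_left _ _), ?_⟩
    have h1 : Real.log (γ / c) ≤ T * a := by
      rw [← div_le_iff₀ ha]
      exact le_max_right _ _
    have h2 : γ / c ≤ Real.exp (T * a) := by
      calc γ / c = Real.exp (Real.log (γ / c)) :=
            (Real.exp_log (by positivity)).symm
        _ ≤ Real.exp (T * a) := Real.exp_le_exp.2 h1
    calc γ = c * (γ / c) := by field_simp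
      _ ≤ c * Real.exp (T * a) := mul_le_mul_of_nonneg_left h2 hca.le
      _ ≤ g T := hsing T
  have hbdd : BddBelow S := ⟨0, fun t ht => ht.1.le⟩
  set τ := sInf S with hτ
  -- positivity of τ
  have hδ : ∃ δ > 0, ∀ t : ℝ, |t - 0| < δ → g t < γ := by
    have := Metric.tendsto_nhds.1 (hcont.tendsto 0) (γ - 1) (by linarith)
    rw [Filter.eventually_iff_exists_mem] at this
    obtain ⟨U, hU, hUg⟩ := this
    obtain ⟨δ, hδ0, hδU⟩ := Metric.mem_nhds_iff.1 hU
    refine ⟨δ, hδ0, fun t ht => ?_⟩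
    have := hUg t (hδU (by simpa [Metric.mem_ball, Real.dist_eq] using ht))
    rw [Real.dist_eq, hg0] at this
    cases' abs_lt.1 this with h1 h2
    linarith
  obtain ⟨δ, hδ0, hδγ⟩ := hδ
  have hτδ : δ ≤ τ := by
    refine le_csInf hne fun t ht => ?_
    by_contra hc
    push_neg at hc
    have : g t < γ := hδγ t (by rw [sub_zero, abs_of_pos ht.1]; exact hc)
    linarith [ht.2]
  have hτpos : 0 < τ := lt_of_lt_of_le hδ0 hτδ
  -- γ ≤ g τ
  have hge : γ ≤ g τ := by
    have h1 : ∀ t : ℝ, τ < t → γ ≤ g t := by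
      intro t htt
      obtain ⟨s, hsS, hst⟩ := csInf_lt_iff hbdd hne |>.1 htt
      exact le_trans hsS.2 (hmono s t hst.le)
    have h2 : Filter.Tendsto g (nhdsWithin τ (Set.Ioi τ)) (nhds (g τ)) :=
      (hcont.tendsto τ).mono_left nhdsWithin_le_nhds
    refine ge_of_tendsto h2 ?_
    filter_upwards [self_mem_nhdsWithin] with t ht
    exact h1 t ht
  -- g τ ≤ γ
  have hle : g τ ≤ γ := by
    have h1 : ∀ t : ℝ, 0 < t → t < τ → g t < γ := by
      intro t ht0 htτ
      by_contra hc
      push_neg at hc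
      exact absurd (csInf_le hbdd ⟨ht0, hc⟩) (not_le.2 htτ)
    have h2 : Filter.Tendsto g (nhdsWithin τ (Set.Iio τ)) (nhds (g τ)) :=
      (hcont.tendsto τ).mono_left nhdsWithin_le_nhds
    refine le_of_tendsto h2 ?_
    filter_upwards [Ioo_mem_nhdsLT_of_mem (show τ ∈ Set.Ioc (τ/2) τ from ⟨by linarith, le_refl _⟩)] with t ht
    exact (h1 t (by linarith [ht.1]) ht.2).le
  exact ⟨hτpos, le_antisymm hle hge, hstrict⟩

end Helpers

section Main2
open scoped Classical
variable {β γ a : ℝ} {ν : Measure ℝ}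
variable (hβ : β ∈ Set.Ioo (0:ℝ) 1) (hγ : 1 < γ) (ha : 0 < a)
set_option linter.unusedSectionVars false
set_option maxHeartbeats 1000000
variable [IsProbabilityMeasure ν] (hν : ν ((Set.Icc 0 a)ᶜ) = 0)

include hν in
lemma pseq_supp_of_rep {n : ℕ}
    (hrep : pseq β γ a ν n = (ν.restrict (Set.Iio a)).withDensity
        (fun x => ENNReal.ofReal (fseq β γ a ν n x))
      + ENNReal.ofReal (cseq β γ a ν n) • Measure.dirac a) (ha0 : 0 ≤ a) :
    (pseq β γ a ν n) ((Set.Icc 0 a)ᶜ) = 0 := by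
  rw [hrep, Measure.add_apply, withDensity_apply _ measurableSet_Icc.compl,
    setLIntegral_measure_zero _ _ (rho_supp hν), Measure.smul_apply,
    Measure.dirac_apply' _ measurableSet_Icc.compl]
  have : a ∉ (Set.Icc 0 a)ᶜ := by simp [ha0]
  simp [Set.indicator_of_notMem this]

lemma pseq_atom_of_rep {n : ℕ}
    (hrep : pseq β γ a ν n = (ν.restrict (Set.Iio a)).withDensity
        (fun x => ENNReal.ofReal (fseq β γ a ν n x))
      + ENNReal.ofReal (cseq β γ a ν n) • Measure.dirac a) :
    (pseq β γ a ν n) {a} = ENNReal.ofReal (cseq β γ a ν n) := by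
  rw [hrep, Measure.add_apply, withDensity_apply _ (measurableSet_singleton a),
    setLIntegral_measure_zero _ _ rho_singleton, Measure.smul_apply,
    Measure.dirac_apply' _ (measurableSet_singleton a)]
  simp

include hβ hγ ha hν in
lemma REP : ∀ n : ℕ,
    pseq β γ a ν n = (ν.restrict (Set.Iio a)).withDensity
        (fun x => ENNReal.ofReal (fseq β γ a ν n x))
      + ENNReal.ofReal (cseq β γ a ν n) • Measure.dirac a
    ∧ IsProbabilityMeasure (pseq β γ a ν n) ∧ 0 < cseq β γ a ν n := by
  have hβ0 := hβ.1
  have hβ1 := hβ.2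
  have hγ0 : (0:ℝ) < γ := by linarith
  intro n
  induction n with
  | zero =>
    refine ⟨?_, ?_, by simp [cseq]⟩
    · have h0 : (fun x : ℝ => ENNReal.ofReal (fseq β γ a ν 0 x)) = 0 := by
        funext x; simp [fseq]
      rw [pseq_zero, h0, withDensity_zero]
      simp [cseq]
    · rw [pseq_zero]; infer_instance
  | succ n ih =>
    obtain ⟨hrep, hprob, hcpos⟩ := ih
    haveI := hprob
    have hsupp := pseq_supp_of_rep hν hrep ha.le
    have hatom : (pseq β γ a ν n) {a} ≠ 0 := by
      rw [pseq_atom_of_rep hrep]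
      simpa [ENNReal.ofReal_eq_zero, not_le] using hcpos
    obtain ⟨ht0, hroot, hstrict⟩ := root hγ ha (pseq β γ a ν n) hsupp hatom
    rw [← tau_def] at ht0 hroot
    set t := tauseq β γ a ν n with htdef
    set Fn : ℝ → ℝ≥0∞ := fun x => ENNReal.ofReal (fseq β γ a ν n x) with hFn
    set E : ℝ → ℝ≥0∞ := fun x => ENNReal.ofReal (Real.exp (t * x) / γ) with hE
    have hFnm : Measurable Fn := (ENNReal.measurable_ofReal.comp (fseq_cont n).measurable)
    have hEm : Measurable E := by
      apply ENNReal.measurable_ofReal.comp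
      fun_prop
    -- the tilted measure
    have htilt : (pseq β γ a ν n).withDensity E
        = (ν.restrict (Set.Iio a)).withDensity (Fn * E)
          + ENNReal.ofReal (cseq β γ a ν n) • (E a • Measure.dirac a) := by
      rw [hrep, withDensity_add_measure, withDensity_smul_measure,
        withDensity_mul _ hFnm hEm, withDensity_dirac' hEm]
    have hmass : ∫⁻ x, E x ∂(pseq β γ a ν n) = 1 := by
      have hint : Integrable (fun x => Real.exp (t * x) / γ) (pseq β γ a ν n) :=
        integrable_of_continuous hsupp (by continuity)
      have hnn : 0 ≤ᵐ[pseq β γ a ν n] fun x => Real.exp (t * x) / γ :=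
        Filter.Eventually.of_forall fun x => by positivity
      have := MeasureTheory.ofReal_integral_eq_lintegral_ofReal hint hnn
      rw [integral_div, hroot, div_self (by linarith)] at this
      rw [hE, ← this]
      simp
    refine ⟨?_, ?_, ?_⟩
    · -- measure representation at n+1
      have h1 : ENNReal.ofReal (1 - β) • ((ν.restrict (Set.Iio a)).withDensity (Fn * E))
          = (ν.restrict (Set.Iio a)).withDensity
              (fun x => ENNReal.ofReal (1 - β) * (Fn x * E x)) := by
        rw [← withDensity_smul _ (show Measurable (Fn * E) from hFnm.mul hEm)]
        congr 1
      have h2' : ENNReal.ofReal β • ν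
          = (ν.restrict (Set.Iio a)).withDensity (fun _ => ENNReal.ofReal β)
            + (ENNReal.ofReal β * ν {a}) • Measure.dirac a := by
        conv_lhs => rw [nu_decomp ha hν]
        rw [smul_add, withDensity_const, smul_smul]
      have h3 : (ν.restrict (Set.Iio a)).withDensity
            (fun x => ENNReal.ofReal (1 - β) * (Fn x * E x))
            + (ν.restrict (Set.Iio a)).withDensity (fun _ => ENNReal.ofReal β)
          = (ν.restrict (Set.Iio a)).withDensity
              (fun x => ENNReal.ofReal (fseq β γ a ν (n+1) x)) := by
        rw [← withDensity_add_left (f := fun x => ENNReal.ofReal (1 - β) * (Fn x * E x)) ((hFnm.mul hEm).const_mul (ENNReal.ofReal (1 - β)))]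
        congr 1
        funext x
        show ENNReal.ofReal (1 - β) * (ENNReal.ofReal (fseq β γ a ν n x)
            * ENNReal.ofReal (Real.exp (t * x) / γ)) + ENNReal.ofReal β = _
        rw [← ENNReal.ofReal_mul (fseq_nonneg hβ hγ n x),
          ← ENNReal.ofReal_mul (by linarith),
          ← ENNReal.ofReal_add (mul_nonneg (by linarith)
            (mul_nonneg (fseq_nonneg hβ hγ n x) (by positivity))) hβ0.le]
        congr 1
        simp only [fseq]
        ring
      have h4 : ENNReal.ofReal (1 - β) * ENNReal.ofReal (cseq β γ a ν n) * E a
            + ENNReal.ofReal β * ν {a}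
          = ENNReal.ofReal (cseq β γ a ν (n+1)) := by
        rw [← ENNReal.ofReal_toReal (measure_ne_top ν {a})]
        show ENNReal.ofReal (1 - β) * ENNReal.ofReal (cseq β γ a ν n)
            * ENNReal.ofReal (Real.exp (t * a) / γ) + _ = _
        rw [← ENNReal.ofReal_mul (by linarith : (0:ℝ) ≤ 1 - β),
          ← ENNReal.ofReal_mul (mul_nonneg (by linarith) hcpos.le),
          ← ENNReal.ofReal_mul hβ0.le,
          ← ENNReal.ofReal_add (mul_nonneg (mul_nonneg (by linarith) hcpos.le)
            (by positivity)) (mul_nonneg hβ0.le ENNReal.toReal_nonneg)]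
        congr 1
        simp only [cseq]
        ring
      rw [pseq_succ, htilt, smul_add, h1, h2', smul_smul, smul_smul,
        add_add_add_comm, h3, ← add_smul, h4]
    · -- probability measure
      have huniv : ((pseq β γ a ν n).withDensity E) Set.univ = 1 := by
        rw [withDensity_apply _ MeasurableSet.univ, Measure.restrict_univ]
        exact hmass
      constructor
      rw [pseq_succ, Measure.add_apply, Measure.smul_apply, Measure.smul_apply,
        huniv, measure_univ, smul_eq_mul, smul_eq_mul, mul_one, mul_one,
        ← ENNReal.ofReal_add (by linarith) hβ0.le]
      norm_num
    · -- positivity of c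
      have h5 : 0 < (1 - β)/γ := div_pos (by linarith) (by linarith)
      have h6 := Real.exp_pos (tauseq β γ a ν n * a)
      have h7 : 0 ≤ β * (ν {a}).toReal := mul_nonneg hβ0.le ENNReal.toReal_nonneg
      simp only [cseq]
      nlinarith [mul_pos (mul_pos h5 h6) hcpos]


include hβ hγ ha hν in
lemma ROOT (n : ℕ) : 0 < tauseq β γ a ν n
    ∧ (∫ x, Real.exp (tauseq β γ a ν n * x) ∂(pseq β γ a ν n)) = γ
    ∧ (∀ t t' : ℝ, 0 ≤ t → t < t' →
        (∫ x, Real.exp (t * x) ∂(pseq β γ a ν n))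
          < ∫ x, Real.exp (t' * x) ∂(pseq β γ a ν n)) := by
  obtain ⟨hrep, hprob, hcpos⟩ := REP hβ hγ ha hν n
  haveI := hprob
  have hsupp := pseq_supp_of_rep hν hrep ha.le
  have hatom : (pseq β γ a ν n) {a} ≠ 0 := by
    rw [pseq_atom_of_rep hrep]
    simpa [ENNReal.ofReal_eq_zero, not_le] using hcpos
  obtain ⟨h1, h2, h3⟩ := root hγ ha (pseq β γ a ν n) hsupp hatom
  rw [← tau_def] at h1 h2
  exact ⟨h1, h2, h3⟩

include hβ hγ ha hν in
lemma integral_pseq (n : ℕ) {h : ℝ → ℝ} (hc : Continuous h) :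
    ∫ x, h x ∂(pseq β γ a ν n)
      = ∫ x, fseq β γ a ν n x * h x ∂(ν.restrict (Set.Iio a))
        + cseq β γ a ν n * h a := by
  obtain ⟨hrep, hprob, hcpos⟩ := REP hβ hγ ha hν n
  have hfi : Integrable (fseq β γ a ν n) (ν.restrict (Set.Iio a)) :=
    integrable_of_continuous (rho_supp hν) (fseq_cont n)
  have hlt : ∫⁻ x, ENNReal.ofReal (fseq β γ a ν n x) ∂(ν.restrict (Set.Iio a)) ≠ ⊤ := by
    rw [← MeasureTheory.ofReal_integral_eq_lintegral_ofReal hfi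
      (Filter.Eventually.of_forall fun x => fseq_nonneg hβ hγ n x)]
    exact ENNReal.ofReal_ne_top
  haveI : IsFiniteMeasure ((ν.restrict (Set.Iio a)).withDensity
      fun x => ENNReal.ofReal (fseq β γ a ν n x)) := isFiniteMeasure_withDensity hlt
  have hwd_supp : ((ν.restrict (Set.Iio a)).withDensity
      fun x => ENNReal.ofReal (fseq β γ a ν n x)) ((Set.Icc 0 a)ᶜ) = 0 := by
    rw [withDensity_apply _ measurableSet_Icc.compl,
      setLIntegral_measure_zero _ _ (rho_supp hν)]
  have hi1 : Integrable h ((ν.restrict (Set.Iio a)).withDensity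
      fun x => ENNReal.ofReal (fseq β γ a ν n x)) := integrable_of_continuous hwd_supp hc
  have hdirac_supp : (Measure.dirac a : Measure ℝ) ((Set.Icc 0 a)ᶜ) = 0 := by
    rw [Measure.dirac_apply' _ measurableSet_Icc.compl]
    have : a ∉ (Set.Icc 0 a)ᶜ := by simp [ha.le]
    simp [Set.indicator_of_notMem this]
  have hi2 : Integrable h (ENNReal.ofReal (cseq β γ a ν n) • Measure.dirac a) :=
    (integrable_of_continuous hdirac_supp hc).smul_measure ENNReal.ofReal_ne_top
  have hdens : (fun x => ENNReal.ofReal (fseq β γ a ν n x))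
      = (fun x => ((Real.toNNReal (fseq β γ a ν n x) : ℝ≥0) : ℝ≥0∞)) := rfl
  rw [hrep, integral_add_measure hi1 hi2, integral_smul_measure, integral_dirac, hdens,
    integral_withDensity_eq_integral_smul
      (show Measurable fun x => Real.toNNReal (fseq β γ a ν n x) from
        measurable_real_toNNReal.comp (fseq_cont n).measurable) h]
  congr 1
  · apply integral_congr_ae
    apply Filter.Eventually.of_forall
    intro x
    show Real.toNNReal (fseq β γ a ν n x) • h x = _
    rw [NNReal.smul_def, Real.coe_toNNReal _ (fseq_nonneg hβ hγ n x), smul_eq_mul]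
  · rw [ENNReal.toReal_ofReal hcpos.le, smul_eq_mul]

include hβ hγ ha hν in
lemma MASS (n : ℕ) :
    (∫ x, fseq β γ a ν n x ∂(ν.restrict (Set.Iio a))) + cseq β γ a ν n = 1 := by
  obtain ⟨hrep, hprob, hcpos⟩ := REP hβ hγ ha hν n
  haveI := hprob
  have h1 : ∫ x, (1:ℝ) ∂(pseq β γ a ν n) = 1 := by simp
  rw [integral_pseq hβ hγ ha hν n continuous_const] at h1
  simpa using h1

include hβ hγ ha hν in
lemma fseq_integral_nonneg (n : ℕ) :
    0 ≤ ∫ x, fseq β γ a ν n x ∂(ν.restrict (Set.Iio a)) :=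
  integral_nonneg fun x => fseq_nonneg hβ hγ n x

include hβ hγ ha hν in
lemma TAUSTEP (m : ℕ) (hmf : ∀ x ∈ Set.Icc 0 a, fseq β γ a ν m x ≤ fseq β γ a ν (m+1) x) :
    tauseq β γ a ν m ≤ tauseq β γ a ν (m+1) := by
  set ρ := ν.restrict (Set.Iio a) with hρ
  obtain ⟨ht0, hroot, _⟩ := ROOT hβ hγ ha hν m
  obtain ⟨ht0', hroot', hstrict'⟩ := ROOT hβ hγ ha hν (m+1)
  set t := tauseq β γ a ν m with htdef
  have hae : ∀ᵐ x ∂ρ, x ∈ Set.Icc 0 a := by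
    have heq : {x : ℝ | ¬ x ∈ Set.Icc 0 a} = (Set.Icc 0 a)ᶜ := rfl
    rw [MeasureTheory.ae_iff, heq]; exact rho_supp hν
  have hec : Continuous fun x => Real.exp (t * x) := by continuity
  have hint : ∀ k : ℕ, Integrable (fun x => fseq β γ a ν k x * Real.exp (t * x)) ρ :=
    fun k => integrable_of_continuous (rho_supp hν) (by exact (fseq_cont k).mul hec)
  have hintf : ∀ k : ℕ, Integrable (fseq β γ a ν k) ρ :=
    fun k => integrable_of_continuous (rho_supp hν) (fseq_cont k)
  -- pointwise comparison
  have hptw : ∀ᵐ x ∂ρ, fseq β γ a ν (m+1) x * Real.exp (t * x)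
      - fseq β γ a ν m x * Real.exp (t * x)
      ≤ Real.exp (t * a) * (fseq β γ a ν (m+1) x - fseq β γ a ν m x) := by
    filter_upwards [hae] with x hx
    have h1 : Real.exp (t * x) ≤ Real.exp (t * a) :=
      Real.exp_le_exp.2 (mul_le_mul_of_nonneg_left hx.2 ht0.le)
    have h2 : 0 ≤ fseq β γ a ν (m+1) x - fseq β γ a ν m x := sub_nonneg.2 (hmf x hx)
    nlinarith [Real.exp_pos (t * x)]
  have hkey : (∫ x, fseq β γ a ν (m+1) x * Real.exp (t * x) ∂ρ)
      - ∫ x, fseq β γ a ν m x * Real.exp (t * x) ∂ρ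
      ≤ Real.exp (t * a) * (cseq β γ a ν m - cseq β γ a ν (m+1)) := by
    have hint_sub : Integrable (fun x => fseq β γ a ν (m+1) x * Real.exp (t * x)
        - fseq β γ a ν m x * Real.exp (t * x)) ρ := (hint (m+1)).sub (hint m)
    have hint_rhs : Integrable (fun x => Real.exp (t * a)
        * (fseq β γ a ν (m+1) x - fseq β γ a ν m x)) ρ :=
      ((hintf (m+1)).sub (hintf m)).const_mul _
    have := integral_mono_ae hint_sub hint_rhs hptw
    rw [integral_sub (hint (m+1)) (hint m), integral_const_mul,
      integral_sub (hintf (m+1)) (hintf m)] at this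
    have hm1 := MASS hβ hγ ha hν m
    have hm2 := MASS hβ hγ ha hν (m+1)
    rw [← hρ] at hm1 hm2
    have hIc : (∫ x, fseq β γ a ν (m+1) x ∂ρ) - ∫ x, fseq β γ a ν m x ∂ρ
        = cseq β γ a ν m - cseq β γ a ν (m+1) := by linarith
    rw [hIc] at this
    linarith
  have hle : ∫ x, Real.exp (t * x) ∂(pseq β γ a ν (m+1)) ≤ γ := by
    rw [integral_pseq hβ hγ ha hν (m+1) hec]
    have hγeq : (∫ x, fseq β γ a ν m x * Real.exp (t * x) ∂ρ)
        + cseq β γ a ν m * Real.exp (t * a) = γ := by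
      rw [← integral_pseq hβ hγ ha hν m hec]
      exact hroot
    nlinarith [hkey]
  by_contra hlt
  push_neg at hlt
  have := hstrict' (tauseq β γ a ν (m+1)) t ht0'.le hlt
  rw [hroot'] at this
  linarith


include hβ hγ ha hν in
lemma MONO : ∀ n : ℕ,
    (∀ x : ℝ, 0 ≤ x →
      fseq β γ a ν n x + β * ((1-β)/γ)^n ≤ fseq β γ a ν (n+1) x)
    ∧ tauseq β γ a ν n ≤ tauseq β γ a ν (n+1) := by
  have hβ0 := hβ.1
  have hβ1 := hβ.2
  have hγ0 : (0:ℝ) < γ := by linarith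
  have hr : (0:ℝ) < (1-β)/γ := div_pos (by linarith) hγ0
  intro n
  induction n with
  | zero =>
    have hbase : ∀ x : ℝ, 0 ≤ x →
        fseq β γ a ν 0 x + β * ((1-β)/γ)^0 ≤ fseq β γ a ν 1 x := by
      intro x hx
      simp only [fseq, pow_zero]
      norm_num
    refine ⟨hbase, TAUSTEP hβ hγ ha hν 0 fun x hx => ?_⟩
    have := hbase x hx.1
    nlinarith [pow_pos hr 0]
  | succ n ih =>
    obtain ⟨hf, hτ⟩ := ih
    have ht0 : 0 < tauseq β γ a ν n := (ROOT hβ hγ ha hν n).1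
    have hstep : ∀ x : ℝ, 0 ≤ x →
        fseq β γ a ν (n+1) x + β * ((1-β)/γ)^(n+1) ≤ fseq β γ a ν (n+2) x := by
      intro x hx
      have hfx := hf x hx
      have hfn1 : 0 ≤ fseq β γ a ν (n+1) x := fseq_nonneg hβ hγ (n+1) x
      have e1 : Real.exp (tauseq β γ a ν n * x) ≤ Real.exp (tauseq β γ a ν (n+1) * x) :=
        Real.exp_le_exp.2 (mul_le_mul_of_nonneg_right hτ hx)
      have e2 : 1 ≤ Real.exp (tauseq β γ a ν n * x) := by
        rw [show (1:ℝ) = Real.exp 0 from (Real.exp_zero).symm]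
        exact Real.exp_le_exp.2 (mul_nonneg ht0.le hx)
      have k1 : Real.exp (tauseq β γ a ν n * x) * fseq β γ a ν (n+1) x
          ≤ Real.exp (tauseq β γ a ν (n+1) * x) * fseq β γ a ν (n+1) x :=
        mul_le_mul_of_nonneg_right e1 hfn1
      have k2 : Real.exp (tauseq β γ a ν n * x) * (fseq β γ a ν n x + β * ((1-β)/γ)^n)
          ≤ Real.exp (tauseq β γ a ν n * x) * fseq β γ a ν (n+1) x :=
        mul_le_mul_of_nonneg_left hfx (Real.exp_pos _).le
      have hbr : 0 ≤ β * ((1-β)/γ)^n := mul_nonneg hβ0.le (pow_pos hr n).le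
      have k3 : β * ((1-β)/γ)^n
          ≤ Real.exp (tauseq β γ a ν n * x) * (β * ((1-β)/γ)^n) :=
        le_mul_of_one_le_left hbr e2
      have k5 : Real.exp (tauseq β γ a ν n * x) * fseq β γ a ν n x + β * ((1-β)/γ)^n
          ≤ Real.exp (tauseq β γ a ν (n+1) * x) * fseq β γ a ν (n+1) x := by
        nlinarith [k1, k2, k3]
      have k6 := mul_le_mul_of_nonneg_left k5 hr.le
      show fseq β γ a ν (n+1) x + β * ((1-β)/γ)^(n+1)
          ≤ (1-β)/γ * Real.exp (tauseq β γ a ν (n+1) * x) * fseq β γ a ν (n+1) x + β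
      have k7 : fseq β γ a ν (n+1) x
          = (1-β)/γ * Real.exp (tauseq β γ a ν n * x) * fseq β γ a ν n x + β := rfl
      have k8 : β * ((1-β)/γ)^(n+1) = (1-β)/γ * (β * ((1-β)/γ)^n) := by
        rw [pow_succ]; ring
      nlinarith [k6]
    refine ⟨hstep, TAUSTEP hβ hγ ha hν (n+1) fun x hx => ?_⟩
    have := hstep x hx.1
    nlinarith [pow_pos hr (n+1)]

include hβ hγ ha hν in
lemma tau_mono : Monotone (tauseq β γ a ν) :=
  monotone_nat_of_le_succ fun n => (MONO hβ hγ ha hν n).2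

include hβ hγ ha hν in
lemma fseq_succ_le (n : ℕ) {x : ℝ} (hx : 0 ≤ x) :
    fseq β γ a ν n x ≤ fseq β γ a ν (n+1) x := by
  have h := (MONO hβ hγ ha hν n).1 x hx
  have hr : (0:ℝ) < (1-β)/γ := div_pos (by linarith [hβ.2]) (by linarith)
  nlinarith [pow_pos hr n, hβ.1]

include hβ hγ ha hν in
lemma fseq_le_of_le {m n : ℕ} (hmn : m ≤ n) {x : ℝ} (hx : 0 ≤ x) :
    fseq β γ a ν m x ≤ fseq β γ a ν n x := by
  induction n with
  | zero => simp_all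
  | succ n ih =>
    rcases Nat.lt_or_ge m (n+1) with h | h
    · exact le_trans (ih (Nat.lt_succ_iff.1 h)) (fseq_succ_le hβ hγ ha hν n hx)
    · have : m = n + 1 := le_antisymm hmn h
      subst this; rfl

include hβ hγ ha hν in
lemma BOUND (n : ℕ) : (1-β)/γ * Real.exp (tauseq β γ a ν n * a) < 1 := by
  have hβ0 := hβ.1
  have hβ1 := hβ.2
  have hγ0 : (0:ℝ) < γ := by linarith
  have hr : (0:ℝ) < (1-β)/γ := div_pos (by linarith) hγ0
  by_contra hc
  push_neg at hc
  set ρ := ν.restrict (Set.Iio a) with hρ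
  set E : ℝ := (1-β)/γ * Real.exp (tauseq β γ a ν n * a) with hE
  obtain ⟨_, hprob, hcpos⟩ := REP hβ hγ ha hν n
  obtain ⟨_, _, hcpos'⟩ := REP hβ hγ ha hν (n+1)
  have hqa : (0:ℝ) ≤ (ν {a}).toReal := ENNReal.toReal_nonneg
  have hcrec : cseq β γ a ν (n+1) = E * cseq β γ a ν n + β * (ν {a}).toReal := by
    simp only [cseq, hE]
  have hcmono : cseq β γ a ν n ≤ cseq β γ a ν (n+1) := by
    rw [hcrec]
    nlinarith
  have hae : ∀ᵐ x ∂ρ, x ∈ Set.Icc 0 a := by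
    have heq : {x : ℝ | ¬ x ∈ Set.Icc 0 a} = (Set.Icc 0 a)ᶜ := rfl
    rw [MeasureTheory.ae_iff, heq]; exact rho_supp hν
  have hintf : ∀ k : ℕ, Integrable (fseq β γ a ν k) ρ :=
    fun k => integrable_of_continuous (rho_supp hν) (fseq_cont k)
  have hImono : (∫ x, fseq β γ a ν n x ∂ρ) + β * ((1-β)/γ)^n * (ρ Set.univ).toReal
      ≤ ∫ x, fseq β γ a ν (n+1) x ∂ρ := by
    have h1 : ∀ᵐ x ∂ρ, fseq β γ a ν n x + β * ((1-β)/γ)^n ≤ fseq β γ a ν (n+1) x := by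
      filter_upwards [hae] with x hx
      exact (MONO hβ hγ ha hν n).1 x hx.1
    have hadd : Integrable (fun x => fseq β γ a ν n x + β * ((1-β)/γ)^n) ρ :=
      (hintf n).add (integrable_const _)
    have h2 := integral_mono_ae hadd (hintf (n+1)) h1
    rw [integral_add (hintf n) (integrable_const _), integral_const, smul_eq_mul, measureReal_def] at h2
    linarith
  have hm1 := MASS hβ hγ ha hν n
  have hm2 := MASS hβ hγ ha hν (n+1)
  rw [← hρ] at hm1 hm2
  have hrhozero : (ρ Set.univ).toReal ≤ 0 := by
    have hpow : 0 < β * ((1-β)/γ)^n := mul_pos hβ0 (pow_pos hr n)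
    nlinarith [ENNReal.toReal_nonneg (a := ρ Set.univ)]
  have hρ0 : ρ = 0 := by
    have h3 : ρ Set.univ = 0 := by
      have := ENNReal.toReal_nonneg (a := ρ Set.univ)
      have h4 : (ρ Set.univ).toReal = 0 := le_antisymm hrhozero this
      rcases ENNReal.toReal_eq_zero_iff _ |>.1 h4 with h | h
      · exact h
      · exact absurd h (measure_ne_top ρ _)
    exact Measure.measure_univ_eq_zero.1 h3
  have hIn : (∫ x, fseq β γ a ν n x ∂ρ) = 0 := by rw [hρ0]; simp
  have hIn1 : (∫ x, fseq β γ a ν (n+1) x ∂ρ) = 0 := by rw [hρ0]; simp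
  have hcn : cseq β γ a ν n = 1 := by linarith
  have hcn1 : cseq β γ a ν (n+1) = 1 := by linarith
  have hqa1 : (ν {a}).toReal = 1 := by
    have h5 : (1:ℝ≥0∞) = ν Set.univ := (measure_univ).symm
    rw [nu_decomp ha hν] at h5
    rw [Measure.add_apply, ← hρ, hρ0, Measure.smul_apply] at h5
    simp at h5
    rw [← h5]
    simp
  rw [hcn, hcn1, hqa1] at hcrec
  have : E = 1 - β := by linarith
  rw [this] at hc
  linarith


omit [IsProbabilityMeasure ν] hν in
include hβ hγ ha in
lemma smax_pos : 0 < a⁻¹ * Real.log (γ / (1 - β)) := by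
  have h1 : (1:ℝ) < γ / (1 - β) := by
    rw [lt_div_iff₀ (by linarith [hβ.2] : (0:ℝ) < 1 - β)]
    nlinarith [hβ.1, hβ.2]
  exact mul_pos (inv_pos.2 ha) (Real.log_pos h1)

include hβ hγ ha hν in
lemma tau_lt_smax (n : ℕ) : tauseq β γ a ν n < a⁻¹ * Real.log (γ / (1 - β)) := by
  have h := BOUND hβ hγ ha hν n
  have hb : (0:ℝ) < 1 - β := by linarith [hβ.2]
  have hγ0 : (0:ℝ) < γ := by linarith
  have h1 : Real.exp (tauseq β γ a ν n * a) < γ / (1 - β) := by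
    rw [lt_div_iff₀ hb]
    have hγne : γ ≠ 0 := ne_of_gt hγ0
    calc Real.exp (tauseq β γ a ν n * a) * (1 - β)
        = (1-β)/γ * Real.exp (tauseq β γ a ν n * a) * γ := by
          field_simp
      _ < 1 * γ := mul_lt_mul_of_pos_right h hγ0
      _ = γ := one_mul _
  have h2 : tauseq β γ a ν n * a < Real.log (γ / (1 - β)) :=
    (Real.lt_log_iff_exp_lt (by positivity)).2 h1
  rw [mul_comm a⁻¹ _, ← div_eq_mul_inv]
  rw [lt_div_iff₀ ha]
  exact h2

include hβ hγ ha hν in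
lemma tau_bddAbove : BddAbove (Set.range (tauseq β γ a ν)) :=
  ⟨a⁻¹ * Real.log (γ / (1 - β)), by
    rintro t ⟨n, rfl⟩
    exact (tau_lt_smax hβ hγ ha hν n).le⟩

include hβ hγ ha hν in
lemma tlim_le_smax : (⨆ n, tauseq β γ a ν n) ≤ a⁻¹ * Real.log (γ / (1 - β)) :=
  ciSup_le fun n => (tau_lt_smax hβ hγ ha hν n).le

include hβ hγ ha hν in
lemma tlim_pos : 0 < ⨆ n, tauseq β γ a ν n :=
  lt_of_lt_of_le (ROOT hβ hγ ha hν 0).1 (le_ciSup (tau_bddAbove hβ hγ ha hν) 0)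

include hβ hγ ha hν in
lemma tau_le_tlim (n : ℕ) : tauseq β γ a ν n ≤ ⨆ n, tauseq β γ a ν n :=
  le_ciSup (tau_bddAbove hβ hγ ha hν) n

include hβ hγ ha hν in
lemma tau_tendsto : Filter.Tendsto (tauseq β γ a ν) Filter.atTop
    (nhds (⨆ n, tauseq β γ a ν n)) :=
  tendsto_atTop_ciSup (tau_mono hβ hγ ha hν) (tau_bddAbove hβ hγ ha hν)

omit [IsProbabilityMeasure ν] hν in
include hβ hγ ha in
/-- key smallness: for `0 ≤ x < a` and `s ≤ smax`, `(1-β)/γ * exp (s*x) < 1`. -/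
lemma u_lt_one {s x : ℝ} (hs : s ≤ a⁻¹ * Real.log (γ / (1 - β))) (hx0 : 0 ≤ x)
    (hxa : x < a) : (1 - β)/γ * Real.exp (s * x) < 1 := by
  have hb : (0:ℝ) < 1 - β := by linarith [hβ.2]
  have hγ0 : (0:ℝ) < γ := by linarith
  set m := a⁻¹ * Real.log (γ / (1 - β)) with hm
  have hm0 : 0 < m := smax_pos hβ hγ ha
  have h1 : s * x ≤ m * x := mul_le_mul_of_nonneg_right hs hx0
  have h2 : m * x < m * a := mul_lt_mul_of_pos_left hxa hm0
  have h3 : m * a = Real.log (γ / (1 - β)) := by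
    rw [hm]; field_simp
  have h4 : Real.exp (s * x) < γ / (1 - β) := by
    calc Real.exp (s * x) ≤ Real.exp (m * x) := Real.exp_le_exp.2 h1
      _ < Real.exp (m * a) := Real.exp_lt_exp.2 h2
      _ = γ / (1 - β) := by rw [h3, Real.exp_log (by positivity)]
  calc (1 - β)/γ * Real.exp (s * x) < (1 - β)/γ * (γ / (1 - β)) :=
        mul_lt_mul_of_pos_left h4 (by positivity)
    _ = 1 := by field_simp

include hβ hγ ha hν in
lemma fseq_le_limdens (n : ℕ) {x : ℝ} (hx0 : 0 ≤ x) (hxa : x < a) :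
    fseq β γ a ν n x ≤ β / (1 - (1-β)/γ * Real.exp ((⨆ n, tauseq β γ a ν n) * x)) := by
  set T := ⨆ n, tauseq β γ a ν n with hT
  set u := (1-β)/γ * Real.exp (T * x) with hu
  have hu1 : u < 1 := u_lt_one hβ hγ ha (tlim_le_smax hβ hγ ha hν) hx0 hxa
  have hu0 : 0 ≤ u := by
    have hb : (0:ℝ) < 1 - β := by linarith [hβ.2]
    have hγ0 : (0:ℝ) < γ := by linarith
    positivity
  have hden : 0 < 1 - u := by linarith
  induction n with
  | zero =>
    simp only [fseq]
    exact div_nonneg hβ.1.le hden.le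
  | succ n ih =>
    have h1 : (1-β)/γ * Real.exp (tauseq β γ a ν n * x) ≤ u := by
      rw [hu]
      have hb : (0:ℝ) < 1 - β := by linarith [hβ.2]
      have hγ0 : (0:ℝ) < γ := by linarith
      exact mul_le_mul_of_nonneg_left
        (Real.exp_le_exp.2 (mul_le_mul_of_nonneg_right (tau_le_tlim hβ hγ ha hν n) hx0))
        (by positivity)
    have h2 : fseq β γ a ν n x ≤ β / (1 - u) := ih
    have h3 : 0 ≤ fseq β γ a ν n x := fseq_nonneg hβ hγ n x
    have h4 : (1-β)/γ * Real.exp (tauseq β γ a ν n * x) * fseq β γ a ν n x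
        ≤ u * (β / (1 - u)) := by
      apply mul_le_mul h1 h2 h3 hu0
    have h5 : u * (β / (1 - u)) + β = β / (1 - u) := by
      field_simp
      ring
    show (1-β)/γ * Real.exp (tauseq β γ a ν n * x) * fseq β γ a ν n x + β ≤ β / (1 - u)
    linarith

include hβ hγ ha hν in
lemma fseq_tendsto {x : ℝ} (hx0 : 0 ≤ x) (hxa : x < a) :
    Filter.Tendsto (fun n => fseq β γ a ν n x) Filter.atTop
      (nhds (β / (1 - (1-β)/γ * Real.exp ((⨆ n, tauseq β γ a ν n) * x)))) := by
  set T := ⨆ n, tauseq β γ a ν n with hT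
  set u := (1-β)/γ * Real.exp (T * x) with hu
  have hu1 : u < 1 := u_lt_one hβ hγ ha (tlim_le_smax hβ hγ ha hν) hx0 hxa
  have hden : 1 - u ≠ 0 := by
    have : 0 < 1 - u := by linarith
    linarith
  have hmono : Monotone fun n => fseq β γ a ν n x :=
    monotone_nat_of_le_succ fun n => fseq_succ_le hβ hγ ha hν n hx0
  have hbdd : BddAbove (Set.range fun n => fseq β γ a ν n x) := by
    refine ⟨β / (1 - u), ?_⟩
    rintro y ⟨n, rfl⟩
    exact fseq_le_limdens hβ hγ ha hν n hx0 hxa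
  set L := ⨆ n, fseq β γ a ν n x with hL
  have htend : Filter.Tendsto (fun n => fseq β γ a ν n x) Filter.atTop (nhds L) :=
    tendsto_atTop_ciSup hmono hbdd
  have h1 : Filter.Tendsto (fun n => fseq β γ a ν (n+1) x) Filter.atTop (nhds L) :=
    htend.comp (Filter.tendsto_add_atTop_nat 1)
  have h2 : Filter.Tendsto (fun n => (1-β)/γ * Real.exp (tauseq β γ a ν n * x)
      * fseq β γ a ν n x + β) Filter.atTop (nhds ((1-β)/γ * Real.exp (T * x) * L + β)) := by
    have ht : Filter.Tendsto (fun n => Real.exp (tauseq β γ a ν n * x)) Filter.atTop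
        (nhds (Real.exp (T * x))) :=
      (Real.continuous_exp.tendsto _).comp ((tau_tendsto hβ hγ ha hν).mul_const x)
    exact (((ht.const_mul ((1-β)/γ)).mul htend).add_const β)
  have h3 : (fun n => fseq β γ a ν (n+1) x)
      = fun n => (1-β)/γ * Real.exp (tauseq β γ a ν n * x) * fseq β γ a ν n x + β := rfl
  rw [h3] at h1
  have heq : L = (1-β)/γ * Real.exp (T * x) * L + β := tendsto_nhds_unique h1 h2
  have hsolve : L = β / (1 - u) := by
    rw [eq_div_iff hden, hu]
    ring_nf
    ring_nf at heq
    linarith [heq]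
  rw [← hsolve]
  exact htend


include hν in
lemma rho_ae : ∀ᵐ x ∂(ν.restrict (Set.Iio a)), 0 ≤ x ∧ x < a := by
  have h1 : ∀ᵐ x ∂(ν.restrict (Set.Iio a)), x ∈ Set.Iio a :=
    ae_restrict_mem measurableSet_Iio
  have h2 : ∀ᵐ x ∂(ν.restrict (Set.Iio a)), x ∈ Set.Icc 0 a := by
    have heq : {x : ℝ | ¬ x ∈ Set.Icc 0 a} = (Set.Icc 0 a)ᶜ := rfl
    rw [MeasureTheory.ae_iff, heq]; exact rho_supp hν
  filter_upwards [h1, h2] with x hx1 hx2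
  exact ⟨hx2.1, hx1⟩

omit [IsProbabilityMeasure ν] in
include hβ hγ ha in
lemma limdens_meas :
    Measurable fun x : ℝ => β / (1 - (1-β)/γ * Real.exp ((⨆ n, tauseq β γ a ν n) * x)) := by
  apply Measurable.div measurable_const
  apply Measurable.sub measurable_const
  exact (Real.measurable_exp.comp (measurable_id.const_mul _)).const_mul _

include hβ hγ ha hν in
lemma Iseq_mono : Monotone fun n => ∫ x, fseq β γ a ν n x ∂(ν.restrict (Set.Iio a)) := by
  apply monotone_nat_of_le_succ
  intro n
  refine integral_mono_ae (integrable_of_continuous (rho_supp hν) (fseq_cont n))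
    (integrable_of_continuous (rho_supp hν) (fseq_cont (n+1))) ?_
  filter_upwards [rho_ae hν] with x hx
  exact fseq_succ_le hβ hγ ha hν n hx.1

include hβ hγ ha hν in
lemma Iseq_le_one (n : ℕ) : (∫ x, fseq β γ a ν n x ∂(ν.restrict (Set.Iio a))) ≤ 1 := by
  have h1 := MASS hβ hγ ha hν n
  have h2 := (REP hβ hγ ha hν n).2.2
  linarith

include hβ hγ ha hν in
lemma Iseq_bddAbove :
    BddAbove (Set.range fun n => ∫ x, fseq β γ a ν n x ∂(ν.restrict (Set.Iio a))) :=
  ⟨1, by rintro y ⟨n, rfl⟩; exact Iseq_le_one hβ hγ ha hν n⟩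

include hβ hγ ha hν in
lemma Iseq_tendsto : Filter.Tendsto (fun n => ∫ x, fseq β γ a ν n x ∂(ν.restrict (Set.Iio a)))
    Filter.atTop (nhds (⨆ n, ∫ x, fseq β γ a ν n x ∂(ν.restrict (Set.Iio a)))) :=
  tendsto_atTop_ciSup (Iseq_mono hβ hγ ha hν) (Iseq_bddAbove hβ hγ ha hν)

include hβ hγ ha hν in
lemma Ilim_le_one : (⨆ n, ∫ x, fseq β γ a ν n x ∂(ν.restrict (Set.Iio a))) ≤ 1 :=
  ciSup_le fun n => Iseq_le_one hβ hγ ha hν n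

include hβ hγ ha hν in
lemma Ilim_nonneg : 0 ≤ ⨆ n, ∫ x, fseq β γ a ν n x ∂(ν.restrict (Set.Iio a)) := by
  refine le_trans (fseq_integral_nonneg hβ hγ ha hν 0) ?_
  exact le_ciSup (Iseq_bddAbove hβ hγ ha hν) 0

include hβ hγ ha hν in
lemma PHI : ∫⁻ x, ENNReal.ofReal (β / (1 - (1-β)/γ
      * Real.exp ((⨆ n, tauseq β γ a ν n) * x))) ∂(ν.restrict (Set.Iio a))
    = ENNReal.ofReal (⨆ n, ∫ x, fseq β γ a ν n x ∂(ν.restrict (Set.Iio a))) := by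
  set ρ := ν.restrict (Set.Iio a) with hρ
  have step1 : ∫⁻ x, ENNReal.ofReal (β / (1 - (1-β)/γ
        * Real.exp ((⨆ n, tauseq β γ a ν n) * x))) ∂ρ
      = ∫⁻ x, ⨆ n, ENNReal.ofReal (fseq β γ a ν n x) ∂ρ := by
    apply lintegral_congr_ae
    filter_upwards [rho_ae hν] with x hx
    have hmono : Monotone fun n => ENNReal.ofReal (fseq β γ a ν n x) :=
      monotone_nat_of_le_succ fun n =>
        ENNReal.ofReal_le_ofReal (fseq_succ_le hβ hγ ha hν n hx.1)
    have htend : Filter.Tendsto (fun n => ENNReal.ofReal (fseq β γ a ν n x)) Filter.atTop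
        (nhds (ENNReal.ofReal (β / (1 - (1-β)/γ
          * Real.exp ((⨆ n, tauseq β γ a ν n) * x))))) :=
      (ENNReal.continuous_ofReal.tendsto _).comp (fseq_tendsto hβ hγ ha hν hx.1 hx.2)
    exact (iSup_eq_of_tendsto hmono htend).symm
  have step2 : ∫⁻ x, ⨆ n, ENNReal.ofReal (fseq β γ a ν n x) ∂ρ
      = ⨆ n, ∫⁻ x, ENNReal.ofReal (fseq β γ a ν n x) ∂ρ := by
    apply lintegral_iSup'
    · exact fun n => (ENNReal.measurable_ofReal.comp (fseq_cont n).measurable).aemeasurable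
    · filter_upwards [rho_ae hν] with x hx
      exact monotone_nat_of_le_succ fun n =>
        ENNReal.ofReal_le_ofReal (fseq_succ_le hβ hγ ha hν n hx.1)
  have step3 : ∀ n : ℕ, ∫⁻ x, ENNReal.ofReal (fseq β γ a ν n x) ∂ρ
      = ENNReal.ofReal (∫ x, fseq β γ a ν n x ∂ρ) := fun n =>
    (MeasureTheory.ofReal_integral_eq_lintegral_ofReal
      (integrable_of_continuous (rho_supp hν) (fseq_cont n))
      (Filter.Eventually.of_forall fun x => fseq_nonneg hβ hγ n x)).symm
  have step4 : (⨆ n, ENNReal.ofReal (∫ x, fseq β γ a ν n x ∂ρ))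
      = ENNReal.ofReal (⨆ n, ∫ x, fseq β γ a ν n x ∂ρ) := by
    refine iSup_eq_of_tendsto ?_ ?_
    · exact fun m n hmn => ENNReal.ofReal_le_ofReal (Iseq_mono hβ hγ ha hν hmn)
    · exact (ENNReal.continuous_ofReal.tendsto _).comp (Iseq_tendsto hβ hγ ha hν)
  rw [step1, step2]
  rw [funext step3, step4]

include hβ hγ ha hν in
lemma limdens_integrable : Integrable (fun x => β / (1 - (1-β)/γ
    * Real.exp ((⨆ n, tauseq β γ a ν n) * x))) (ν.restrict (Set.Iio a)) := by
  set ρ := ν.restrict (Set.Iio a) with hρ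
  have hnn : 0 ≤ᵐ[ρ] fun x => β / (1 - (1-β)/γ
      * Real.exp ((⨆ n, tauseq β γ a ν n) * x)) := by
    filter_upwards [rho_ae hν] with x hx
    have hu1 := u_lt_one hβ hγ ha (tlim_le_smax hβ hγ ha hν) hx.1 hx.2
    exact div_nonneg hβ.1.le (by linarith)
  constructor
  · exact (limdens_meas hβ hγ ha).aestronglyMeasurable
  · rw [MeasureTheory.hasFiniteIntegral_iff_norm]
    have heq : ∫⁻ x, ENNReal.ofReal ‖β / (1 - (1-β)/γ
        * Real.exp ((⨆ n, tauseq β γ a ν n) * x))‖ ∂ρ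
        = ∫⁻ x, ENNReal.ofReal (β / (1 - (1-β)/γ
        * Real.exp ((⨆ n, tauseq β γ a ν n) * x))) ∂ρ := by
      apply lintegral_congr_ae
      filter_upwards [hnn] with x hx
      rw [Real.norm_eq_abs, abs_of_nonneg hx]
    rw [heq, PHI hβ hγ ha hν]
    exact ENNReal.ofReal_lt_top
  
include hβ hγ ha hν in
lemma limdens_integral : (∫ x, β / (1 - (1-β)/γ
      * Real.exp ((⨆ n, tauseq β γ a ν n) * x)) ∂(ν.restrict (Set.Iio a)))
    = ⨆ n, ∫ x, fseq β γ a ν n x ∂(ν.restrict (Set.Iio a)) := by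
  have hnn : 0 ≤ᵐ[ν.restrict (Set.Iio a)] fun x => β / (1 - (1-β)/γ
      * Real.exp ((⨆ n, tauseq β γ a ν n) * x)) := by
    filter_upwards [rho_ae hν] with x hx
    have hu1 := u_lt_one hβ hγ ha (tlim_le_smax hβ hγ ha hν) hx.1 hx.2
    exact div_nonneg hβ.1.le (by linarith)
  have h1 := MeasureTheory.ofReal_integral_eq_lintegral_ofReal
    (limdens_integrable hβ hγ ha hν) hnn
  rw [PHI hβ hγ ha hν] at h1
  have h2 : 0 ≤ ∫ x, β / (1 - (1-β)/γ
      * Real.exp ((⨆ n, tauseq β γ a ν n) * x)) ∂(ν.restrict (Set.Iio a)) :=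
    integral_nonneg_of_ae hnn
  exact (ENNReal.ofReal_eq_ofReal_iff h2 (Ilim_nonneg hβ hγ ha hν)).1 h1

include hβ hγ ha hν in
lemma cseq_tendsto : Filter.Tendsto (fun n => cseq β γ a ν n) Filter.atTop
    (nhds (1 - ⨆ n, ∫ x, fseq β γ a ν n x ∂(ν.restrict (Set.Iio a)))) := by
  have h1 : (fun n => cseq β γ a ν n)
      = fun n => 1 - ∫ x, fseq β γ a ν n x ∂(ν.restrict (Set.Iio a)) := by
    funext n
    have := MASS hβ hγ ha hν n
    linarith
  rw [h1]
  exact (tendsto_const_nhds.sub (Iseq_tendsto hβ hγ ha hν))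

include hβ hγ ha hν in
lemma CLIMEQ : 1 - (⨆ n, ∫ x, fseq β γ a ν n x ∂(ν.restrict (Set.Iio a)))
    = (1-β)/γ * Real.exp ((⨆ n, tauseq β γ a ν n) * a)
        * (1 - ⨆ n, ∫ x, fseq β γ a ν n x ∂(ν.restrict (Set.Iio a)))
      + β * (ν {a}).toReal := by
  set cinf := 1 - ⨆ n, ∫ x, fseq β γ a ν n x ∂(ν.restrict (Set.Iio a)) with hc
  have h1 : Filter.Tendsto (fun n => cseq β γ a ν (n+1)) Filter.atTop (nhds cinf) :=
    (cseq_tendsto hβ hγ ha hν).comp (Filter.tendsto_add_atTop_nat 1)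
  have h2 : Filter.Tendsto (fun n => (1-β)/γ * Real.exp (tauseq β γ a ν n * a)
      * cseq β γ a ν n + β * (ν {a}).toReal) Filter.atTop
      (nhds ((1-β)/γ * Real.exp ((⨆ n, tauseq β γ a ν n) * a) * cinf + β * (ν {a}).toReal)) := by
    have ht : Filter.Tendsto (fun n => Real.exp (tauseq β γ a ν n * a)) Filter.atTop
        (nhds (Real.exp ((⨆ n, tauseq β γ a ν n) * a))) :=
      (Real.continuous_exp.tendsto _).comp ((tau_tendsto hβ hγ ha hν).mul_const a)
    exact ((ht.const_mul ((1-β)/γ)).mul (cseq_tendsto hβ hγ ha hν)).add_const _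
  have h3 : (fun n => cseq β γ a ν (n+1))
      = fun n => (1-β)/γ * Real.exp (tauseq β γ a ν n * a) * cseq β γ a ν n
        + β * (ν {a}).toReal := rfl
  rw [h3] at h1
  exact tendsto_nhds_unique h1 h2


omit [IsProbabilityMeasure ν] hν in
lemma rep_apply {g : ℝ → ℝ} (hgi : Integrable g (ν.restrict (Set.Iio a)))
    (hg0 : 0 ≤ᵐ[ν.restrict (Set.Iio a)] g) {r : ℝ} (hr : 0 ≤ r) {A : Set ℝ}
    (hA : MeasurableSet A) :
    (((ν.restrict (Set.Iio a)).withDensity (fun x => ENNReal.ofReal (g x))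
        + ENNReal.ofReal r • Measure.dirac a) A).toReal
      = (∫ x in A, g x ∂(ν.restrict (Set.Iio a))) + (if a ∈ A then r else 0) := by
  classical
  set ρ := ν.restrict (Set.Iio a) with hρ
  have e1 : ∫⁻ x in A, ENNReal.ofReal (g x) ∂ρ
      = ENNReal.ofReal (∫ x in A, g x ∂ρ) :=
    (MeasureTheory.ofReal_integral_eq_lintegral_ofReal (hgi.restrict)
      (ae_restrict_of_ae hg0)).symm
  have hgann : 0 ≤ ∫ x in A, g x ∂ρ := integral_nonneg_of_ae (ae_restrict_of_ae hg0)
  rw [Measure.add_apply, withDensity_apply _ hA, e1, Measure.smul_apply,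
    Measure.dirac_apply' _ hA, smul_eq_mul]
  by_cases hmem : a ∈ A
  · rw [Set.indicator_of_mem hmem]
    simp only [Pi.one_apply, mul_one]
    rw [ENNReal.toReal_add ENNReal.ofReal_ne_top ENNReal.ofReal_ne_top,
      ENNReal.toReal_ofReal hgann, ENNReal.toReal_ofReal hr, if_pos hmem]
  · rw [Set.indicator_of_notMem hmem]
    simp only [mul_zero, add_zero]
    rw [ENNReal.toReal_ofReal hgann, if_neg hmem, add_zero]

include hβ hγ ha hν in
lemma pseq_apply (n : ℕ) {A : Set ℝ} (hA : MeasurableSet A) :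
    ((pseq β γ a ν n) A).toReal
      = (∫ x in A, fseq β γ a ν n x ∂(ν.restrict (Set.Iio a)))
        + (if a ∈ A then cseq β γ a ν n else 0) := by
  obtain ⟨hrep, _, hcpos⟩ := REP hβ hγ ha hν n
  rw [hrep]
  exact rep_apply (integrable_of_continuous (rho_supp hν) (fseq_cont n))
    (Filter.Eventually.of_forall fun x => fseq_nonneg hβ hγ n x) hcpos.le hA


include hβ hγ ha hν in
lemma TVMASTER : TendstoTV (pseq β γ a ν)
    ((ν.restrict (Set.Iio a)).withDensity (fun x => ENNReal.ofReal
        (β / (1 - (1-β)/γ * Real.exp ((⨆ n, tauseq β γ a ν n) * x))))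
      + ENNReal.ofReal (1 - ⨆ n, ∫ x, fseq β γ a ν n x ∂(ν.restrict (Set.Iio a)))
          • Measure.dirac a) := by
  classical
  set ρ := ν.restrict (Set.Iio a) with hρ
  set T := ⨆ n, tauseq β γ a ν n with hT
  set Lf : ℝ → ℝ := fun x => β / (1 - (1-β)/γ * Real.exp (T * x)) with hLf
  set Ilim : ℝ := ⨆ n, ∫ x, fseq β γ a ν n x ∂ρ with hIlim
  have hLnn : 0 ≤ᵐ[ρ] Lf := by
    filter_upwards [rho_ae hν] with x hx
    have hu1 := u_lt_one hβ hγ ha (tlim_le_smax hβ hγ ha hν) hx.1 hx.2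
    exact div_nonneg hβ.1.le (by linarith)
  have hLint : Integrable Lf ρ := limdens_integrable hβ hγ ha hν
  have hintf : ∀ k : ℕ, Integrable (fseq β γ a ν k) ρ :=
    fun k => integrable_of_continuous (rho_supp hν) (fseq_cont k)
  have hc0 : 0 ≤ 1 - Ilim := by linarith [Ilim_le_one hβ hγ ha hν]
  intro ε hε
  obtain ⟨N1, hN1⟩ := (Metric.tendsto_atTop.1 (Iseq_tendsto hβ hγ ha hν)) (ε/2) (by linarith)
  obtain ⟨N2, hN2⟩ := (Metric.tendsto_atTop.1 (cseq_tendsto hβ hγ ha hν)) (ε/2) (by linarith)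
  refine ⟨max N1 N2, fun n hn A hA => ?_⟩
  have hn1 : n ≥ N1 := le_trans (le_max_left _ _) hn
  have hn2 : n ≥ N2 := le_trans (le_max_right _ _) hn
  have hIn := hN1 n hn1
  have hcn := hN2 n hn2
  rw [Real.dist_eq] at hIn hcn
  rw [pseq_apply hβ hγ ha hν n hA, rep_apply hLint hLnn hc0 hA]
  have hfle : ∀ᵐ x ∂ρ, 0 ≤ Lf x - fseq β γ a ν n x := by
    filter_upwards [rho_ae hν] with x hx
    have := fseq_le_limdens hβ hγ ha hν n hx.1 hx.2
    simp only [hLf]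
    linarith [this]
  have hsub_int : Integrable (fun x => Lf x - fseq β γ a ν n x) ρ := hLint.sub (hintf n)
  have hdiff_eq : ∫ x in A, (Lf x - fseq β γ a ν n x) ∂ρ
      = (∫ x in A, Lf x ∂ρ) - ∫ x in A, fseq β γ a ν n x ∂ρ :=
    integral_sub (hLint.restrict) ((hintf n).restrict)
  have hdiff_nn : 0 ≤ ∫ x in A, (Lf x - fseq β γ a ν n x) ∂ρ :=
    integral_nonneg_of_ae (ae_restrict_of_ae hfle)
  have hset : ∫ x in A, (Lf x - fseq β γ a ν n x) ∂ρ
      ≤ ∫ x, (Lf x - fseq β γ a ν n x) ∂ρ :=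
    setIntegral_le_integral hsub_int hfle
  have hfull : ∫ x, (Lf x - fseq β γ a ν n x) ∂ρ
      = Ilim - ∫ x, fseq β γ a ν n x ∂ρ := by
    rw [integral_sub hLint (hintf n)]
    congr 1
    exact limdens_integral hβ hγ ha hν
  have key1 : |(∫ x in A, fseq β γ a ν n x ∂ρ) - ∫ x in A, Lf x ∂ρ|
      ≤ Ilim - ∫ x, fseq β γ a ν n x ∂ρ := by
    rw [abs_sub_comm, abs_of_nonneg (by linarith)]
    linarith
  have key1' : Ilim - (∫ x, fseq β γ a ν n x ∂ρ) < ε/2 := by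
    cases' abs_lt.1 hIn with h1 h2
    linarith
  by_cases hmem : a ∈ A
  · rw [if_pos hmem, if_pos hmem]
    have heq : (∫ x in A, fseq β γ a ν n x ∂ρ) + cseq β γ a ν n
        - ((∫ x in A, Lf x ∂ρ) + (1 - Ilim))
        = ((∫ x in A, fseq β γ a ν n x ∂ρ) - ∫ x in A, Lf x ∂ρ)
          + (cseq β γ a ν n - (1 - Ilim)) := by ring
    rw [heq]
    calc |_ + _| ≤ |(∫ x in A, fseq β γ a ν n x ∂ρ) - ∫ x in A, Lf x ∂ρ|
          + |cseq β γ a ν n - (1 - Ilim)| := abs_add_le _ _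
      _ < ε := by linarith
  · rw [if_neg hmem, if_neg hmem, add_zero, add_zero]
    calc |(∫ x in A, fseq β γ a ν n x ∂ρ) - ∫ x in A, Lf x ∂ρ|
        ≤ Ilim - ∫ x, fseq β γ a ν n x ∂ρ := key1
      _ < ε := by linarith


omit [IsProbabilityMeasure ν] hν in
include hβ hγ ha in
lemma denom_lt_one {s x : ℝ} (hs0 : 0 ≤ s) (hs : s < a⁻¹ * Real.log (γ / (1 - β)))
    (hx0 : 0 ≤ x) (hxa : x ≤ a) : (1 - β)/γ * Real.exp (s * x) < 1 := by
  have hb : (0:ℝ) < 1 - β := by linarith [hβ.2]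
  have hγ0 : (0:ℝ) < γ := by linarith
  have h1 : s * x ≤ s * a := mul_le_mul_of_nonneg_left hxa hs0
  have h2 : s * a < Real.log (γ / (1 - β)) := by
    have := mul_lt_mul_of_pos_right hs ha
    rwa [mul_comm a⁻¹ _, mul_assoc, inv_mul_cancel₀ (ne_of_gt ha), mul_one] at this
  have h3 : Real.exp (s * x) < γ / (1 - β) := by
    calc Real.exp (s * x) ≤ Real.exp (s * a) := Real.exp_le_exp.2 h1
      _ < γ / (1 - β) := by
        rw [← Real.exp_log (show (0:ℝ) < γ / (1-β) by positivity)]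
        exact Real.exp_lt_exp.2 h2
  calc (1 - β)/γ * Real.exp (s * x) < (1 - β)/γ * (γ / (1 - β)) :=
        mul_lt_mul_of_pos_left h3 (by positivity)
    _ = 1 := by field_simp

omit [IsProbabilityMeasure ν] in
include hβ hγ ha hν in
lemma F_integrable {s : ℝ} (hs0 : 0 ≤ s) (hs : s < a⁻¹ * Real.log (γ / (1 - β)))
    {μ : Measure ℝ} [IsFiniteMeasure μ] (hμ : μ ((Set.Icc 0 a)ᶜ) = 0) :
    Integrable (fun x => β / (1 - (1 - β)/γ * Real.exp (s * x))) μ := by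
  have hb : (0:ℝ) < 1 - β := by linarith [hβ.2]
  have hγ0 : (0:ℝ) < γ := by linarith
  have hda : 0 < 1 - (1 - β)/γ * Real.exp (s * a) := by
    linarith [denom_lt_one hβ hγ ha hs0 hs (le_refl a |> fun _ => ha.le) (le_refl a)]
  refine integrable_of_bound hμ ?_ (C := β / (1 - (1 - β)/γ * Real.exp (s * a))) ?_
  · apply Measurable.aestronglyMeasurable
    apply Measurable.div measurable_const
    apply Measurable.sub measurable_const
    exact (Real.measurable_exp.comp (measurable_id.const_mul _)).const_mul _
  · intro x hx
    have h1 : Real.exp (s * x) ≤ Real.exp (s * a) :=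
      Real.exp_le_exp.2 (mul_le_mul_of_nonneg_left hx.2 hs0)
    have hdx : 0 < 1 - (1 - β)/γ * Real.exp (s * x) := by
      linarith [denom_lt_one hβ hγ ha hs0 hs hx.1 hx.2]
    have h2 : 1 - (1 - β)/γ * Real.exp (s * a) ≤ 1 - (1 - β)/γ * Real.exp (s * x) := by
      have := mul_le_mul_of_nonneg_left h1 (by positivity : (0:ℝ) ≤ (1-β)/γ)
      linarith
    rw [abs_of_nonneg (div_nonneg hβ.1.le hdx.le)]
    exact div_le_div_of_nonneg_left hβ.1.le hda h2

include hβ hγ ha hν in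
lemma F_split {s : ℝ} (hs0 : 0 ≤ s) (hs : s < a⁻¹ * Real.log (γ / (1 - β))) :
    (∫ x, β / (1 - (1 - β)/γ * Real.exp (s * x)) ∂ν)
      = (∫ x, β / (1 - (1 - β)/γ * Real.exp (s * x)) ∂(ν.restrict (Set.Iio a)))
        + (ν {a}).toReal * (β / (1 - (1 - β)/γ * Real.exp (s * a))) := by
  have hdirac_supp : (Measure.dirac a : Measure ℝ) ((Set.Icc 0 a)ᶜ) = 0 := by
    rw [Measure.dirac_apply' _ measurableSet_Icc.compl]
    have : a ∉ (Set.Icc 0 a)ᶜ := by simp [ha.le]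
    simp [Set.indicator_of_notMem this]
  have hi1 : Integrable (fun x => β / (1 - (1 - β)/γ * Real.exp (s * x)))
      (ν.restrict (Set.Iio a)) := F_integrable hβ hγ ha hν hs0 hs (rho_supp hν)
  have hi2 : Integrable (fun x => β / (1 - (1 - β)/γ * Real.exp (s * x)))
      (ν {a} • Measure.dirac a) := by
    have := F_integrable hβ hγ ha hν hs0 hs (μ := Measure.dirac a) hdirac_supp
    exact this.smul_measure (measure_ne_top ν _)
  conv_lhs => rw [nu_decomp ha hν]
  rw [integral_add_measure hi1 hi2, integral_smul_measure, integral_dirac, smul_eq_mul]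

include hβ hγ ha hν in
lemma F_strictMono (hpos : 0 < ν (Set.Ioc 0 a)) {s s' : ℝ} (hs0 : 0 ≤ s) (hss' : s < s')
    (hs' : s' < a⁻¹ * Real.log (γ / (1 - β))) :
    (∫ x, β / (1 - (1 - β)/γ * Real.exp (s * x)) ∂ν)
      < ∫ x, β / (1 - (1 - β)/γ * Real.exp (s' * x)) ∂ν := by
  have hb : (0:ℝ) < 1 - β := by linarith [hβ.2]
  have hγ0 : (0:ℝ) < γ := by linarith
  have hs0' : (0:ℝ) ≤ s' := le_trans hs0 hss'.le
  have hslt : s < a⁻¹ * Real.log (γ / (1 - β)) := lt_trans hss' hs'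
  have hi1 := F_integrable hβ hγ ha hν hs0 hslt (μ := ν) hν
  have hi2 := F_integrable hβ hγ ha hν hs0' hs' (μ := ν) hν
  have hae : ∀ᵐ x ∂ν, x ∈ Set.Icc 0 a := by
    have heq : {x : ℝ | ¬ x ∈ Set.Icc 0 a} = (Set.Icc 0 a)ᶜ := rfl
    rw [MeasureTheory.ae_iff, heq]; exact hν
  set h : ℝ → ℝ := fun x => β / (1 - (1 - β)/γ * Real.exp (s' * x))
    - β / (1 - (1 - β)/γ * Real.exp (s * x)) with hh
  have hnn : 0 ≤ᵐ[ν] h := by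
    filter_upwards [hae] with x hx
    have hd1 : 0 < 1 - (1 - β)/γ * Real.exp (s * x) := by
      linarith [denom_lt_one hβ hγ ha hs0 hslt hx.1 hx.2]
    have hd2 : 0 < 1 - (1 - β)/γ * Real.exp (s' * x) := by
      linarith [denom_lt_one hβ hγ ha hs0' hs' hx.1 hx.2]
    have hle : 1 - (1 - β)/γ * Real.exp (s' * x) ≤ 1 - (1 - β)/γ * Real.exp (s * x) := by
      have h1 : Real.exp (s * x) ≤ Real.exp (s' * x) :=
        Real.exp_le_exp.2 (mul_le_mul_of_nonneg_right hss'.le hx.1)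
      have := mul_le_mul_of_nonneg_left h1 (by positivity : (0:ℝ) ≤ (1-β)/γ)
      linarith
    have := div_le_div_of_nonneg_left hβ.1.le hd2 hle
    simp only [hh, Pi.zero_apply]
    linarith
  have hint : Integrable h ν := hi2.sub hi1
  have hsupp : Set.Ioc 0 a ⊆ Function.support h := by
    intro x hx
    have hd1 : 0 < 1 - (1 - β)/γ * Real.exp (s * x) := by
      linarith [denom_lt_one hβ hγ ha hs0 hslt hx.1.le hx.2]
    have hd2 : 0 < 1 - (1 - β)/γ * Real.exp (s' * x) := by
      linarith [denom_lt_one hβ hγ ha hs0' hs' hx.1.le hx.2]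
    have hlt : 1 - (1 - β)/γ * Real.exp (s' * x) < 1 - (1 - β)/γ * Real.exp (s * x) := by
      have h1 : Real.exp (s * x) < Real.exp (s' * x) :=
        Real.exp_lt_exp.2 (mul_lt_mul_of_pos_right hss' hx.1)
      have := mul_lt_mul_of_pos_left h1 (by positivity : (0:ℝ) < (1-β)/γ)
      linarith
    have hstrict := div_lt_div_of_pos_left hβ.1 hd2 hlt
    refine Function.mem_support.2 ?_
    have hhx : h x = β / (1 - (1 - β)/γ * Real.exp (s' * x))
        - β / (1 - (1 - β)/γ * Real.exp (s * x)) := rfl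
    rw [hhx]
    intro hc
    rw [sub_eq_zero] at hc
    linarith
  have hpos2 : 0 < ν (Function.support h) := lt_of_lt_of_le hpos (measure_mono hsupp)
  have := (integral_pos_iff_support_of_nonneg_ae hnn hint).2 hpos2
  rw [hh, integral_sub hi2 hi1] at this
  linarith

include hβ hγ ha hν in
lemma F_const_of_null (hnull : ν (Set.Ioc 0 a) = 0) {s : ℝ} :
    (∫ x, β / (1 - (1 - β)/γ * Real.exp (s * x)) ∂ν) = β / (1 - (1 - β)/γ) := by
  have h0 : ν ({(0:ℝ)}ᶜ) = 0 := by
    have hsub : ({(0:ℝ)}ᶜ : Set ℝ) ⊆ Set.Ioc 0 a ∪ (Set.Icc 0 a)ᶜ := by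
      intro x hx
      simp only [Set.mem_compl_iff, Set.mem_singleton_iff] at hx
      by_cases hmem : x ∈ Set.Icc 0 a
      · left
        exact ⟨lt_of_le_of_ne hmem.1 (Ne.symm hx), hmem.2⟩
      · right
        exact hmem
    exact measure_mono_null hsub (measure_union_null hnull hν)
  have hae : ∀ᵐ x ∂ν, x = 0 := by
    have heq : {x : ℝ | ¬ x = 0} = ({(0:ℝ)}ᶜ : Set ℝ) := rfl
    rw [MeasureTheory.ae_iff, heq]; exact h0
  have : (fun x => β / (1 - (1 - β)/γ * Real.exp (s * x)))
      =ᵐ[ν] fun _ => β / (1 - (1 - β)/γ) := by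
    filter_upwards [hae] with x hx
    rw [hx]
    simp
  rw [integral_congr_ae this, integral_const, measureReal_def, measure_univ]
  simp

omit [IsProbabilityMeasure ν] hν in
include hβ hγ in
lemma F0_lt_one : β / (1 - (1 - β)/γ) < 1 := by
  have hb : (0:ℝ) < 1 - β := by linarith [hβ.2]
  have hγ0 : (0:ℝ) < γ := by linarith
  have hβ0 := hβ.1
  have hd : 0 < 1 - (1 - β)/γ := by
    rw [sub_pos, div_lt_one hγ0]
    linarith
  rw [div_lt_one hd, sub_div' , lt_div_iff₀ hγ0]
  · nlinarith
  · exact ne_of_gt hγ0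

include hβ hγ ha hν in
lemma F_pos_of_eq_one {σ : ℝ} (h1 : (∫ x, β / (1 - (1 - β)/γ * Real.exp (σ * x)) ∂ν) = 1) :
    0 < ν (Set.Ioc 0 a) := by
  by_contra hc
  push_neg at hc
  have hz : ν (Set.Ioc 0 a) = 0 := le_antisymm hc zero_le
  rw [F_const_of_null hβ hγ ha hν hz] at h1
  linarith [F0_lt_one hβ hγ]

include hβ hγ ha hν in
lemma F_unique {s s' : ℝ} (hs : s ∈ Set.Ioo 0 (a⁻¹ * Real.log (γ / (1 - β))))
    (hs' : s' ∈ Set.Ioo 0 (a⁻¹ * Real.log (γ / (1 - β))))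
    (h1 : (∫ x, β / (1 - (1 - β)/γ * Real.exp (s * x)) ∂ν) = 1)
    (h1' : (∫ x, β / (1 - (1 - β)/γ * Real.exp (s' * x)) ∂ν) = 1) : s' = s := by
  have hpos := F_pos_of_eq_one hβ hγ ha hν h1
  rcases lt_trichotomy s' s with h | h | h
  · exfalso
    have := F_strictMono hβ hγ ha hν hpos hs'.1.le h hs.2
    rw [h1, h1'] at this
    exact lt_irrefl _ this
  · exact h
  · exfalso
    have := F_strictMono hβ hγ ha hν hpos hs.1.le h hs'.2
    rw [h1, h1'] at this
    exact lt_irrefl _ this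


omit [IsProbabilityMeasure ν] hν in
include hβ hγ ha in
lemma rpow_eq (x : ℝ) : ((1 - β)/γ : ℝ) ^ (1 - x/a)
    = (1-β)/γ * Real.exp ((a⁻¹ * Real.log (γ / (1 - β))) * x) := by
  have hb : (0:ℝ) < 1 - β := by linarith [hβ.2]
  have hγ0 : (0:ℝ) < γ := by linarith
  have hr0 : (0:ℝ) < (1-β)/γ := by positivity
  set L := Real.log (γ/(1-β)) with hL
  have hlog : Real.log ((1-β)/γ) = -L := by
    rw [hL, ← Real.log_inv]
    congr 1
    rw [inv_div]
  have h2 : Real.exp (-L) = (1-β)/γ := by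
    rw [Real.exp_neg, hL, Real.exp_log (by positivity : (0:ℝ) < γ/(1-β)), inv_div]
  calc ((1 - β)/γ : ℝ) ^ (1 - x/a) = Real.exp (Real.log ((1-β)/γ) * (1 - x/a)) :=
        Real.rpow_def_of_pos hr0 _
    _ = Real.exp (-L + L * (x/a)) := by rw [hlog]; congr 1; ring
    _ = Real.exp (-L) * Real.exp (L * (x/a)) := Real.exp_add _ _
    _ = (1-β)/γ * Real.exp ((a⁻¹ * L) * x) := by
        rw [h2]; congr 2; ring

omit [IsProbabilityMeasure ν] hν in
include hβ hγ ha in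
lemma W_eq {x : ℝ} (hx0 : 0 ≤ x) (hxa : x < a) :
    ENNReal.ofReal β * (ENNReal.ofReal (1 - ((1 - β) / γ) ^ (1 - x / a)))⁻¹
      = ENNReal.ofReal (β / (1 - (1-β)/γ
          * Real.exp ((a⁻¹ * Real.log (γ / (1 - β))) * x))) := by
  rw [rpow_eq hβ hγ ha]
  have hd : 0 < 1 - (1-β)/γ * Real.exp ((a⁻¹ * Real.log (γ / (1 - β))) * x) := by
    linarith [u_lt_one hβ hγ ha (le_refl (a⁻¹ * Real.log (γ / (1 - β)))) hx0 hxa]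
  rw [ENNReal.ofReal_div_of_pos hd]
  rfl

omit [IsProbabilityMeasure ν] hν in
include hβ hγ ha in
lemma W_top : ENNReal.ofReal β * (ENNReal.ofReal (1 - ((1 - β) / γ) ^ ((1:ℝ) - a / a)))⁻¹
    = ⊤ := by
  rw [div_self (ne_of_gt ha), sub_self, Real.rpow_zero, sub_self, ENNReal.ofReal_zero,
    ENNReal.inv_zero, ENNReal.mul_top]
  simpa [ENNReal.ofReal_eq_zero, not_le] using hβ.1

include ha hν in
lemma lint_decomp (g : ℝ → ℝ≥0∞) : ∫⁻ x, g x ∂ν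
    = (∫⁻ x, g x ∂(ν.restrict (Set.Iio a))) + ν {a} * g a := by
  conv_lhs => rw [nu_decomp ha hν]
  rw [lintegral_add_measure, lintegral_smul_measure, lintegral_dirac, smul_eq_mul]

include hβ hγ ha hν in
lemma lint_W_atom (hqa : ν {a} ≠ 0) :
    ∫⁻ x, ENNReal.ofReal β * (ENNReal.ofReal (1 - ((1 - β) / γ) ^ (1 - x / a)))⁻¹ ∂ν
      = ⊤ := by
  rw [lint_decomp ha hν]
  rw [W_top hβ hγ ha, ENNReal.mul_top hqa]
  exact add_top _

include hβ hγ ha hν in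
lemma lint_W_rho :
    (∫⁻ x, ENNReal.ofReal β * (ENNReal.ofReal (1 - ((1 - β) / γ) ^ (1 - x / a)))⁻¹
        ∂(ν.restrict (Set.Iio a)))
      = ∫⁻ x, ENNReal.ofReal (β / (1 - (1-β)/γ
          * Real.exp ((a⁻¹ * Real.log (γ / (1 - β))) * x))) ∂(ν.restrict (Set.Iio a)) := by
  apply lintegral_congr_ae
  filter_upwards [rho_ae hν] with x hx
  exact W_eq hβ hγ ha hx.1 hx.2

include hβ hγ ha hν in
lemma exp_smax : (1-β)/γ * Real.exp ((a⁻¹ * Real.log (γ / (1 - β))) * a) = 1 := by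
  have hb : (0:ℝ) < 1 - β := by linarith [hβ.2]
  have hγ0 : (0:ℝ) < γ := by linarith
  have h1 : (a⁻¹ * Real.log (γ / (1 - β))) * a = Real.log (γ / (1 - β)) := by
    field_simp
  rw [h1, Real.exp_log (by positivity : (0:ℝ) < γ/(1-β))]
  field_simp

include hβ hγ ha hν in
/-- consequences of `tlim < smax`. -/
lemma TLT (hlt : (⨆ n, tauseq β γ a ν n) < a⁻¹ * Real.log (γ / (1 - β))) :
    (1 - ⨆ n, ∫ x, fseq β γ a ν n x ∂(ν.restrict (Set.Iio a)))
        = (ν {a}).toReal * (β / (1 - (1-β)/γ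
            * Real.exp ((⨆ n, tauseq β γ a ν n) * a)))
      ∧ (∫ x, β / (1 - (1-β)/γ * Real.exp ((⨆ n, tauseq β γ a ν n) * x)) ∂ν) = 1 := by
  set T := ⨆ n, tauseq β γ a ν n with hT
  set Ilim := ⨆ n, ∫ x, fseq β γ a ν n x ∂(ν.restrict (Set.Iio a)) with hIlim
  set r := (1-β)/γ * Real.exp (T * a) with hr
  have hT0 : 0 < T := tlim_pos hβ hγ ha hν
  have hrlt : r < 1 := denom_lt_one hβ hγ ha hT0.le hlt ha.le (le_refl a)
  have hrpos : 0 < 1 - r := by linarith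
  have hclim := CLIMEQ hβ hγ ha hν
  rw [← hT, ← hIlim, ← hr] at hclim
  have hqaR : (0:ℝ) ≤ (ν {a}).toReal := ENNReal.toReal_nonneg
  have hc_eq : 1 - Ilim = (ν {a}).toReal * (β / (1 - r)) := by
    have h1 : (1 - Ilim) * (1 - r) = β * (ν {a}).toReal := by nlinarith [hclim]
    have h2 : ((ν {a}).toReal * (β / (1 - r))) * (1 - r) = β * (ν {a}).toReal := by
      rw [mul_assoc, div_mul_cancel₀ _ (ne_of_gt hrpos)]
      ring
    exact mul_right_cancel₀ (ne_of_gt hrpos) (h1.trans h2.symm)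
  refine ⟨hc_eq, ?_⟩
  rw [F_split hβ hγ ha hν hT0.le hlt]
  have h3 : (∫ x, β / (1 - (1-β)/γ * Real.exp (T * x)) ∂(ν.restrict (Set.Iio a)))
      = Ilim := limdens_integral hβ hγ ha hν
  rw [h3, ← hr]
  linarith [hc_eq]

include hβ hγ ha hν in
lemma case1_tlt
    (hcase : 1 < ∫⁻ x, ENNReal.ofReal β
        * (ENNReal.ofReal (1 - ((1 - β) / γ) ^ (1 - x / a)))⁻¹ ∂ν) :
    (⨆ n, tauseq β γ a ν n) < a⁻¹ * Real.log (γ / (1 - β)) := by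
  rcases lt_or_eq_of_le (tlim_le_smax hβ hγ ha hν) with h | h
  · exact h
  exfalso
  by_cases hqa : ν {a} = 0
  · have h5 := lint_W_rho hβ hγ ha hν
    have h6 := PHI hβ hγ ha hν
    rw [h] at h6
    rw [lint_decomp ha hν, hqa, zero_mul, add_zero, h5, h6] at hcase
    have h7 : ENNReal.ofReal (⨆ n, ∫ x, fseq β γ a ν n x ∂(ν.restrict (Set.Iio a))) ≤ 1 := by
      rw [← ENNReal.ofReal_one]
      exact ENNReal.ofReal_le_ofReal (Ilim_le_one hβ hγ ha hν)
    exact absurd (lt_of_lt_of_le hcase h7) (lt_irrefl _)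
  · have hclim := CLIMEQ hβ hγ ha hν
    rw [h, exp_smax hβ hγ ha hν, one_mul] at hclim
    have h8 : β * (ν {a}).toReal = 0 := by linarith
    have h9 : (ν {a}).toReal = 0 := by
      rcases mul_eq_zero.1 h8 with h' | h'
      · linarith [hβ.1]
      · exact h'
    rcases (ENNReal.toReal_eq_zero_iff _).1 h9 with h' | h'
    · exact hqa h'
    · exact (measure_ne_top ν _) h'

include ha hν in
lemma withDensity_decomp {g : ℝ → ℝ≥0∞} (hg : Measurable g) :
    ν.withDensity g = (ν.restrict (Set.Iio a)).withDensity g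
      + (ν {a} * g a) • Measure.dirac a := by
  conv_lhs => rw [nu_decomp ha hν]
  rw [withDensity_add_measure, withDensity_smul_measure, withDensity_dirac' hg, smul_smul]

include hβ hγ ha hν in
lemma case1_target (hlt : (⨆ n, tauseq β γ a ν n) < a⁻¹ * Real.log (γ / (1 - β))) :
    ν.withDensity (fun x => ENNReal.ofReal (β / (1 - (1-β)/γ
        * Real.exp ((⨆ n, tauseq β γ a ν n) * x))))
      = (ν.restrict (Set.Iio a)).withDensity (fun x => ENNReal.ofReal (β / (1 - (1-β)/γ
          * Real.exp ((⨆ n, tauseq β γ a ν n) * x))))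
        + ENNReal.ofReal (1 - ⨆ n, ∫ x, fseq β γ a ν n x ∂(ν.restrict (Set.Iio a)))
            • Measure.dirac a := by
  have hmeas : Measurable fun x => ENNReal.ofReal (β / (1 - (1-β)/γ
      * Real.exp ((⨆ n, tauseq β γ a ν n) * x))) :=
    ENNReal.measurable_ofReal.comp (limdens_meas hβ hγ ha)
  rw [withDensity_decomp ha hν hmeas]
  congr 1
  have hc_eq := (TLT hβ hγ ha hν hlt).1
  rw [hc_eq, ENNReal.ofReal_mul ENNReal.toReal_nonneg,
    ENNReal.ofReal_toReal (measure_ne_top ν {a})]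


include hβ hγ ha hν in
lemma case2_qa
    (hcase : ∫⁻ x, ENNReal.ofReal β
        * (ENNReal.ofReal (1 - ((1 - β) / γ) ^ (1 - x / a)))⁻¹ ∂ν ≤ 1) :
    ν {a} = 0 := by
  by_contra h
  rw [lint_W_atom hβ hγ ha hν h] at hcase
  simp at hcase

include ha hν in
lemma nu_eq_rho (hqa : ν {a} = 0) : ν = ν.restrict (Set.Iio a) := by
  conv_lhs => rw [nu_decomp ha hν]
  rw [hqa, zero_smul, add_zero]

include hβ hγ ha hν in
lemma nu_ae_Icc : ∀ᵐ x ∂ν, x ∈ Set.Icc 0 a := by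
  have heq : {x : ℝ | ¬ x ∈ Set.Icc 0 a} = (Set.Icc 0 a)ᶜ := rfl
  rw [MeasureTheory.ae_iff, heq]; exact hν

include hβ hγ ha hν in
lemma case2_T
    (hcase : ∫⁻ x, ENNReal.ofReal β
        * (ENNReal.ofReal (1 - ((1 - β) / γ) ^ (1 - x / a)))⁻¹ ∂ν ≤ 1) :
    (⨆ n, tauseq β γ a ν n) = a⁻¹ * Real.log (γ / (1 - β)) := by
  rcases lt_or_eq_of_le (tlim_le_smax hβ hγ ha hν) with hlt | h
  swap
  · exact h
  exfalso
  set T := ⨆ n, tauseq β γ a ν n with hT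
  set smax := a⁻¹ * Real.log (γ / (1 - β)) with hsmax
  have hT0 : 0 < T := tlim_pos hβ hγ ha hν
  obtain ⟨hc_eq, hF1⟩ := TLT hβ hγ ha hν hlt
  set s' := (T + smax)/2 with hs'def
  have hs'1 : T < s' := by rw [hs'def]; linarith
  have hs'2 : s' < smax := by rw [hs'def]; linarith
  have hs'0 : 0 < s' := by linarith
  by_cases hpos : 0 < ν (Set.Ioc 0 a)
  · have hmono := F_strictMono hβ hγ ha hν hpos hT0.le hs'1 hs'2
    have hint := F_integrable hβ hγ ha hν hs'0.le hs'2 (μ := ν) hν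
    have hnn : 0 ≤ᵐ[ν] fun x => β / (1 - (1 - β)/γ * Real.exp (s' * x)) := by
      filter_upwards [nu_ae_Icc hβ hγ ha hν] with x hx
      have := denom_lt_one hβ hγ ha hs'0.le hs'2 hx.1 hx.2
      exact div_nonneg hβ.1.le (by linarith)
    have heq := MeasureTheory.ofReal_integral_eq_lintegral_ofReal hint hnn
    have hmono2 : (∫⁻ x, ENNReal.ofReal (β / (1 - (1 - β)/γ * Real.exp (s' * x))) ∂ν)
        ≤ ∫⁻ x, ENNReal.ofReal β
            * (ENNReal.ofReal (1 - ((1 - β) / γ) ^ (1 - x / a)))⁻¹ ∂ν := by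
      apply lintegral_mono_ae
      filter_upwards [nu_ae_Icc hβ hγ ha hν] with x hx
      rcases lt_or_eq_of_le hx.2 with hxa | hxa
      · rw [W_eq hβ hγ ha hx.1 hxa]
        apply ENNReal.ofReal_le_ofReal
        have hd1 : 0 < 1 - (1 - β)/γ * Real.exp (smax * x) := by
          linarith [u_lt_one hβ hγ ha (le_refl smax) hx.1 hxa]
        have hle : 1 - (1 - β)/γ * Real.exp (smax * x)
            ≤ 1 - (1 - β)/γ * Real.exp (s' * x) := by
          have h1 : Real.exp (s' * x) ≤ Real.exp (smax * x) :=
            Real.exp_le_exp.2 (mul_le_mul_of_nonneg_right hs'2.le hx.1)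
          have hb : (0:ℝ) < 1 - β := by linarith [hβ.2]
          have hγ0 : (0:ℝ) < γ := by linarith
          have := mul_le_mul_of_nonneg_left h1 (by positivity : (0:ℝ) ≤ (1-β)/γ)
          linarith
        exact div_le_div_of_nonneg_left hβ.1.le hd1 hle
      · subst hxa
        rw [W_top hβ hγ ha]
        exact le_top
    have hle1 : ENNReal.ofReal (∫ x, β / (1 - (1 - β)/γ * Real.exp (s' * x)) ∂ν) ≤ 1 := by
      rw [heq]
      exact le_trans hmono2 hcase
    have hle2 : (∫ x, β / (1 - (1 - β)/γ * Real.exp (s' * x)) ∂ν) ≤ 1 :=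
      ENNReal.ofReal_le_one.1 hle1
    rw [hF1] at hmono
    linarith
  · push_neg at hpos
    have hz : ν (Set.Ioc 0 a) = 0 := le_antisymm hpos zero_le
    rw [F_const_of_null hβ hγ ha hν hz] at hF1
    linarith [F0_lt_one hβ hγ]

include hβ hγ ha hν in
lemma case2_target
    (hcase : ∫⁻ x, ENNReal.ofReal β
        * (ENNReal.ofReal (1 - ((1 - β) / γ) ^ (1 - x / a)))⁻¹ ∂ν ≤ 1) :
    ν.withDensity (fun x => ENNReal.ofReal β
        * (ENNReal.ofReal (1 - ((1 - β) / γ) ^ (1 - x / a)))⁻¹)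
      + (1 - ∫⁻ y, ENNReal.ofReal β
          * (ENNReal.ofReal (1 - ((1 - β) / γ) ^ (1 - y / a)))⁻¹ ∂ν) • Measure.dirac a
      = (ν.restrict (Set.Iio a)).withDensity (fun x => ENNReal.ofReal
          (β / (1 - (1-β)/γ * Real.exp ((⨆ n, tauseq β γ a ν n) * x))))
        + ENNReal.ofReal (1 - ⨆ n, ∫ x, fseq β γ a ν n x ∂(ν.restrict (Set.Iio a)))
            • Measure.dirac a := by
  have hqa := case2_qa hβ hγ ha hν hcase
  have hT := case2_T hβ hγ ha hν hcase
  have hlint : (∫⁻ x, ENNReal.ofReal β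
      * (ENNReal.ofReal (1 - ((1 - β) / γ) ^ (1 - x / a)))⁻¹ ∂ν)
      = ENNReal.ofReal (⨆ n, ∫ x, fseq β γ a ν n x ∂(ν.restrict (Set.Iio a))) := by
    rw [lint_decomp ha hν, hqa, zero_mul, add_zero, lint_W_rho hβ hγ ha hν]
    have h6 := PHI hβ hγ ha hν
    rw [hT] at h6
    exact h6
  congr 1
  · -- withDensity part
    have h1 : ν.withDensity (fun x => ENNReal.ofReal β
        * (ENNReal.ofReal (1 - ((1 - β) / γ) ^ (1 - x / a)))⁻¹)
        = (ν.restrict (Set.Iio a)).withDensity (fun x => ENNReal.ofReal β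
          * (ENNReal.ofReal (1 - ((1 - β) / γ) ^ (1 - x / a)))⁻¹) := by
      conv_lhs => rw [nu_eq_rho ha hν hqa]
    rw [h1]
    apply withDensity_congr_ae
    filter_upwards [rho_ae hν] with x hx
    rw [W_eq hβ hγ ha hx.1 hx.2, hT]
  · -- atom part
    rw [hlint]
    congr 1
    rw [← ENNReal.ofReal_one, ← ENNReal.ofReal_sub _ (Ilim_nonneg hβ hγ ha hν)]


end Main2

set_option maxHeartbeats 1000000 in
/-- Lemma 13 of the paper. In the Lenski model, for `0 < a ≤ M`, the
sequence started from `δ_a` with mutant distribution `q^a` satisfies: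
(1) if `∫ β q^a(dx)/(1-((1-β)/γ)^{1-x/a}) > 1` (possibly infinite), there is a unique
`s_a ∈ (0, a⁻¹ log(γ/(1-β)))` with `∫ β q^a(dx)/(1-((1-β)/γ) e^{s_a x}) = 1` and the
sequence converges in total variation to `p^{a,*}(dx) = β q^a(dx)/(1-((1-β)/γ) e^{s_a x})`;
(2) if `∫ β q^a(dx)/(1-((1-β)/γ)^{1-x/a}) ≤ 1`, the sequence converges in total variation
to `p^{a,*}(dx) = β q^a(dx)/(1-((1-β)/γ)^{1-x/a})
+ (1 - ∫ β q^a(dy)/(1-((1-β)/γ)^{1-y/a})) δ_a`. -/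
theorem stmt15 (M : ℝ) (hM : 0 < M) (β : ℝ) (hβ : β ∈ Set.Ioo (0:ℝ) 1) (γ : ℝ) (hγ : 1 < γ)
    (q : MeasureTheory.Measure ℝ) [IsProbabilityMeasure q]
    (hq : q ((Set.Icc 0 M)ᶜ) = 0)
    (a : ℝ) (ha0 : 0 < a) (haM : a ≤ M) :
    ((1 < ∫⁻ x, ENNReal.ofReal β *
          (ENNReal.ofReal (1 - ((1 - β) / γ) ^ (1 - x / a)))⁻¹ ∂(trunc a q)) →
      ∃ s : ℝ, s ∈ Set.Ioo 0 (a⁻¹ * Real.log (γ / (1 - β))) ∧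
        (∫ x, β / (1 - (1 - β) / γ * Real.exp (s * x)) ∂(trunc a q)) = 1 ∧
        (∀ s' : ℝ, s' ∈ Set.Ioo 0 (a⁻¹ * Real.log (γ / (1 - β))) →
          (∫ x, β / (1 - (1 - β) / γ * Real.exp (s' * x)) ∂(trunc a q)) = 1 → s' = s) ∧
        TendstoTV (lenski β γ (trunc a q) (MeasureTheory.Measure.dirac a))
          ((trunc a q).withDensity fun x =>
            ENNReal.ofReal (β / (1 - (1 - β) / γ * Real.exp (s * x))))) ∧
    ((∫⁻ x, ENNReal.ofReal β *
          (ENNReal.ofReal (1 - ((1 - β) / γ) ^ (1 - x / a)))⁻¹ ∂(trunc a q) ≤ 1) →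
      TendstoTV (lenski β γ (trunc a q) (MeasureTheory.Measure.dirac a))
        ((trunc a q).withDensity
            (fun x => ENNReal.ofReal β *
              (ENNReal.ofReal (1 - ((1 - β) / γ) ^ (1 - x / a)))⁻¹)
          + (1 - ∫⁻ y, ENNReal.ofReal β *
                (ENNReal.ofReal (1 - ((1 - β) / γ) ^ (1 - y / a)))⁻¹ ∂(trunc a q)) •
              MeasureTheory.Measure.dirac a)) := by
  
  set ν : Measure ℝ := trunc a q with hνdef
  have hmin : Measurable fun x : ℝ => min x a := measurable_id.min measurable_const
  haveI hprob : IsProbabilityMeasure ν := by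
    rw [hνdef, trunc]
    exact Measure.isProbabilityMeasure_map hmin.aemeasurable
  have hν : ν ((Set.Icc 0 a)ᶜ) = 0 := by
    rw [hνdef, trunc, Measure.map_apply hmin measurableSet_Icc.compl]
    apply measure_mono_null _ hq
    intro x hx
    simp only [Set.mem_preimage, Set.mem_compl_iff, Set.mem_Icc, not_and, not_le] at hx ⊢
    intro hx0M
    exfalso
    have h1 : 0 ≤ min x a := le_min hx0M ha0.le
    have h2 : min x a ≤ a := min_le_right _ _
    exact absurd (hx h1) (not_lt.2 h2)
  have hTV : TendstoTV (lenski β γ ν (Measure.dirac a)) ((ν.restrict (Set.Iio a)).withDensity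
      (fun x => ENNReal.ofReal (β / (1 - (1-β)/γ * Real.exp ((⨆ n, tauseq β γ a ν n) * x))))
      + ENNReal.ofReal (1 - ⨆ n, ∫ x, fseq β γ a ν n x ∂(ν.restrict (Set.Iio a)))
          • Measure.dirac a) := TVMASTER hβ hγ ha0 hν
  constructor
  · intro hcase
    have hlt := case1_tlt hβ hγ ha0 hν hcase
    obtain ⟨hc_eq, hF1⟩ := TLT hβ hγ ha0 hν hlt
    have hmem : (⨆ n, tauseq β γ a ν n) ∈ Set.Ioo 0 (a⁻¹ * Real.log (γ / (1 - β))) :=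
      ⟨tlim_pos hβ hγ ha0 hν, hlt⟩
    refine ⟨⨆ n, tauseq β γ a ν n, hmem, hF1, ?_, ?_⟩
    · intro s' hs' hF's'
      exact F_unique hβ hγ ha0 hν hmem hs' hF1 hF's'
    · rw [case1_target hβ hγ ha0 hν hlt]
      exact hTV
  · intro hcase
    rw [case2_target hβ hγ ha0 hν hcase]
    exact hTV
end

section
/- Let u and v be Borel probability measures on [0,1] such that v_{[0,1)} ≺ u_{[0,1)}, and suppose that for some 0 ≤ a < 1 and 0 < ε < 1 one has u([0,a]) ≥ v([0,a]) + ε. Then ∫ x u(dx) ≤ (1 − ε(1−a))·∫ x v(dx). In particular, Kingman's model satisfies Assumption 2 with the constant c(a,ε) = 1/(1 − ε(1−a)) > 1: if ∫ x u(dx) > 0, then 1/∫ x u(dx) ≥ c(a,ε)·(1/∫ x v(dx)). -/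
open MeasureTheory Set

/-- Assumption 2 for Kingman's model. If `u`, `v` are Borel probability
measures on `[0,1]` with `v_{[0,1)} ≺ u_{[0,1)}` and `u([0,a]) ≥ v([0,a]) + ε` for some
`0 ≤ a < 1`, `0 < ε < 1`, then `∫ x u(dx) ≤ (1 - ε(1-a)) ∫ x v(dx)`; in particular
Kingman's model satisfies Assumption 2 with `c(a,ε) = (1 - ε(1-a))⁻¹ > 1`: if
`∫ x u(dx) > 0`, then `s(1,u) = 1/∫ x u(dx) ≥ c(a,ε)·(1/∫ x v(dx)) = c(a,ε)·s(1,v)`. -/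
theorem stmt18 (u v : MeasureTheory.Measure ℝ)
    [IsProbabilityMeasure u] [IsProbabilityMeasure v]
    (hu : u ((Set.Icc (0:ℝ) 1)ᶜ) = 0) (hv : v ((Set.Icc (0:ℝ) 1)ᶜ) = 0)
    (hcomp : v.restrict (Set.Ico 0 1) ≤ u.restrict (Set.Ico 0 1))
    (a ε : ℝ) (ha0 : 0 ≤ a) (ha1 : a < 1) (hε0 : 0 < ε) (hε1 : ε < 1)
    (hgap : (v (Set.Icc 0 a)).toReal + ε ≤ (u (Set.Icc 0 a)).toReal) :
    (∫ x, x ∂u) ≤ (1 - ε * (1 - a)) * (∫ x, x ∂v) ∧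
    1 < (1 - ε * (1 - a))⁻¹ ∧
    (0 < ∫ x, x ∂u →
      (1 - ε * (1 - a))⁻¹ * (1 / ∫ x, x ∂v) ≤ 1 / ∫ x, x ∂u) := by
  have hk0 : 0 < 1 - ε * (1 - a) := by nlinarith
  have hk1 : 1 - ε * (1 - a) < 1 := by nlinarith
  -- a.e. membership in [0,1]
  have hau : ∀ᵐ x ∂u, x ∈ Set.Icc (0:ℝ) 1 := by
    rw [ae_iff]; exact hu
  have hav : ∀ᵐ x ∂v, x ∈ Set.Icc (0:ℝ) 1 := by
    rw [ae_iff]; exact hv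
  -- integrability of id
  have hintu : Integrable (fun x : ℝ => x) u := by
    refine (integrable_const (1:ℝ)).mono' measurable_id.aestronglyMeasurable ?_
    filter_upwards [hau] with x hx
    rw [Real.norm_eq_abs, abs_le]; exact ⟨by linarith [hx.1], hx.2⟩
  have hintv : Integrable (fun x : ℝ => x) v := by
    refine (integrable_const (1:ℝ)).mono' measurable_id.aestronglyMeasurable ?_
    filter_upwards [hav] with x hx
    rw [Real.norm_eq_abs, abs_le]; exact ⟨by linarith [hx.1], hx.2⟩
  set g : ℝ → ENNReal := fun x => ENNReal.ofReal (1 - x) with hg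
  have hgmeas : Measurable g := (measurable_const.sub measurable_id).ennreal_ofReal
  set I : Set ℝ := Set.Ico (0:ℝ) 1 with hI
  have hImeas : MeasurableSet I := measurableSet_Ico
  set S : Set ℝ := Set.Icc (0:ℝ) a with hS
  have hSsub : S ⊆ I := fun x hx => ⟨hx.1, lt_of_le_of_lt hx.2 ha1⟩
  -- the difference measure
  set w : Measure ℝ := u.restrict I - v.restrict I with hw
  have hwadd : w + v.restrict I = u.restrict I := Measure.sub_add_cancel_of_le hcomp
  have hvuS : v S ≤ u S := by
    have := Measure.le_iff'.mp hcomp S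
    rwa [Measure.restrict_apply' hImeas, Measure.restrict_apply' hImeas,
      Set.inter_eq_self_of_subset_left hSsub] at this
  have hwS : ENNReal.ofReal ε ≤ w S := by
    have hws : w S = u S - v S := by
      rw [hw, Measure.sub_apply measurableSet_Icc hcomp, Measure.restrict_apply measurableSet_Icc,
        Measure.restrict_apply measurableSet_Icc, Set.inter_eq_self_of_subset_left hSsub]
    rw [hws]
    refine ENNReal.ofReal_le_of_le_toReal ?_
    rw [ENNReal.toReal_sub_of_le hvuS (measure_ne_top u S)]
    linarith
  -- lintegral of g over the complement of I vanishes
  have hIc : ∀ (μ : Measure ℝ), μ ((Set.Icc (0:ℝ) 1)ᶜ) = 0 → ∫⁻ x in Iᶜ, g x ∂μ = 0 := by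
    intro μ hμ
    have hae : ∀ᵐ x ∂μ, x ∈ Set.Icc (0:ℝ) 1 := by
      rw [ae_iff]; exact hμ
    have h0 : ∫⁻ x in Iᶜ, g x ∂μ = ∫⁻ x in Iᶜ, 0 ∂μ := by
      refine setLIntegral_congr_fun_ae hImeas.compl ?_
      filter_upwards [hae] with x hx hxc
      have hx1 : (1:ℝ) ≤ x := by
        by_contra h
        exact hxc ⟨hx.1, lt_of_not_ge h⟩
      have hle : 1 - x ≤ 0 := by linarith
      simp [hg, ENNReal.ofReal_eq_zero.mpr hle]
    rw [h0]
    simp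
  have hGv : ∫⁻ x, g x ∂v = ∫⁻ x in I, g x ∂v := by
    rw [← lintegral_add_compl g hImeas (μ := v), hIc v hv, add_zero]
  -- key lintegral inequality
  have hkey : ∫⁻ x, g x ∂v + ENNReal.ofReal ((1 - a) * ε) ≤ ∫⁻ x, g x ∂u := by
    calc ∫⁻ x, g x ∂v + ENNReal.ofReal ((1 - a) * ε)
        = ∫⁻ x in I, g x ∂v + ENNReal.ofReal ((1 - a) * ε) := by rw [hGv]
      _ ≤ ∫⁻ x in I, g x ∂v + ∫⁻ x, g x ∂w := by
          gcongr
          calc ENNReal.ofReal ((1 - a) * ε)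
              = ENNReal.ofReal (1 - a) * ENNReal.ofReal ε := by
                rw [ENNReal.ofReal_mul (by linarith)]
            _ ≤ ENNReal.ofReal (1 - a) * w S := by gcongr
            _ = ∫⁻ _ in S, ENNReal.ofReal (1 - a) ∂w := by rw [setLIntegral_const]
            _ ≤ ∫⁻ x in S, g x ∂w := by
                refine setLIntegral_mono hgmeas ?_
                intro x hx
                exact ENNReal.ofReal_le_ofReal (by linarith [hx.2])
            _ ≤ ∫⁻ x, g x ∂w := setLIntegral_le_lintegral _ _
      _ = ∫⁻ x, g x ∂(w + v.restrict I) := by rw [lintegral_add_measure]; ring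
      _ = ∫⁻ x in I, g x ∂u := by rw [hwadd]
      _ ≤ ∫⁻ x, g x ∂u := setLIntegral_le_lintegral _ _
  -- finiteness
  have hfin : ∀ (μ : Measure ℝ) [IsProbabilityMeasure μ], μ ((Set.Icc (0:ℝ) 1)ᶜ) = 0 →
      ∫⁻ x, g x ∂μ ≤ 1 := by
    intro μ _ hμ
    have hae : ∀ᵐ x ∂μ, x ∈ Set.Icc (0:ℝ) 1 := by
      rw [ae_iff]; exact hμ
    calc ∫⁻ x, g x ∂μ ≤ ∫⁻ _, 1 ∂μ := by
          refine lintegral_mono_ae ?_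
          filter_upwards [hae] with x hx
          exact ENNReal.ofReal_le_one.mpr (by linarith [hx.1])
      _ = 1 := by simp
  have hGu_fin : ∫⁻ x, g x ∂u ≠ ⊤ := (lt_of_le_of_lt (hfin u hu) ENNReal.one_lt_top).ne
  have hGv_fin : ∫⁻ x, g x ∂v ≠ ⊤ := (lt_of_le_of_lt (hfin v hv) ENNReal.one_lt_top).ne
  -- convert to real integrals
  have hconv : ∀ (μ : Measure ℝ) [IsProbabilityMeasure μ], μ ((Set.Icc (0:ℝ) 1)ᶜ) = 0 →
      Integrable (fun x : ℝ => x) μ → (∫⁻ x, g x ∂μ).toReal = 1 - ∫ x, x ∂μ := by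
    intro μ _ hμ hint
    have hae : ∀ᵐ x ∂μ, x ∈ Set.Icc (0:ℝ) 1 := by
      rw [ae_iff]; exact hμ
    have h1 : ∫ x, (1 - x) ∂μ = (∫⁻ x, g x ∂μ).toReal := by
      refine integral_eq_lintegral_of_nonneg_ae ?_
        ((measurable_const.sub measurable_id).aestronglyMeasurable)
      filter_upwards [hae] with x hx
      simp only [Pi.zero_apply]; linarith [hx.2]
    rw [← h1, integral_sub (integrable_const 1) hint, integral_const]
    simp
  have hIuval := hconv u hu hintu
  have hIvval := hconv v hv hintv
  -- key real inequality
  have hreal : (∫ x, x ∂u) + ε * (1 - a) ≤ ∫ x, x ∂v := by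
    have h1 : ((∫⁻ x, g x ∂v) + ENNReal.ofReal ((1 - a) * ε)).toReal ≤ (∫⁻ x, g x ∂u).toReal :=
      ENNReal.toReal_mono hGu_fin hkey
    rw [ENNReal.toReal_add hGv_fin ENNReal.ofReal_ne_top, ENNReal.toReal_ofReal (by nlinarith),
      hIuval, hIvval] at h1
    nlinarith
  have hIv1 : ∫ x, x ∂v ≤ 1 := by
    calc ∫ x, x ∂v ≤ ∫ _, (1:ℝ) ∂v := by
          refine integral_mono_ae hintv (integrable_const 1) ?_
          filter_upwards [hav] with x hx
          exact hx.2
      _ = 1 := by simp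
  have hmain : (∫ x, x ∂u) ≤ (1 - ε * (1 - a)) * (∫ x, x ∂v) := by nlinarith
  refine ⟨hmain, (one_lt_inv₀ hk0).mpr hk1, ?_⟩
  intro hIu
  have hIv0 : 0 < ∫ x, x ∂v := by nlinarith
  have h2 : 1 / ((1 - ε * (1 - a)) * ∫ x, x ∂v) ≤ 1 / ∫ x, x ∂u :=
    one_div_le_one_div_of_le hIu hmain
  calc (1 - ε * (1 - a))⁻¹ * (1 / ∫ x, x ∂v)
      = 1 / ((1 - ε * (1 - a)) * ∫ x, x ∂v) := by
        rw [one_div, one_div, mul_inv]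
    _ ≤ 1 / ∫ x, x ∂u := h2
end
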